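/- arXiv:2411.08524 — 8 statements merged into one kernel-verified Lean document; each statement's English description precedes it below -/
import Mathlib

section
/- Let n, p, m be positive integers and let Y, O, M, S be real n×p matrices and X a real n×m matrix. For a real m×p matrix B, define the n×p matrix Ã(B) by Ã(B)_{ij} = exp(O_{ij} + (XB)_{ij} + M_{ij} + S_{ij}²/2), and define f(B) = Tr(Yᵀ(XB)) − Σ_{i=1}^n Σ_{j=1}^p Ã(B)_{ij} (the B-dependent part of the PLN evidence lower bound). Then f is differentiable at every B, and for every real m×p matrix H the derivative of f at B in direction H equals Tr((Xᵀ(Y − Ã(B)))ᵀ H); that is, the gradient of f at B is the m×p matrix Xᵀ(Y − Ã(B)). -/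
open Matrix

attribute [local instance] Matrix.normedAddCommGroup Matrix.normedSpace

/-- the gradient of the B-dependent part of the PLN ELBO,
`f(B) = Tr(Yᵀ(XB)) − Σ_{ij} Ã(B)_{ij}` with
`Ã(B)_{ij} = exp(O_{ij} + (XB)_{ij} + M_{ij} + S_{ij}²/2)`,
is `Xᵀ(Y − Ã(B))`. -/
theorem pln_elbo_grad_B
    (n p m : ℕ) (hn : 0 < n) (hp : 0 < p) (hm : 0 < m)
    (Y O M S : Matrix (Fin n) (Fin p) ℝ) (X : Matrix (Fin n) (Fin m) ℝ)
    (Atil : Matrix (Fin m) (Fin p) ℝ → Matrix (Fin n) (Fin p) ℝ)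
    (hAtil : ∀ B i j, Atil B i j = Real.exp (O i j + (X * B) i j + M i j + (S i j) ^ 2 / 2))
    (f : Matrix (Fin m) (Fin p) ℝ → ℝ)
    (hf : ∀ B, f B = (Yᵀ * (X * B)).trace - ∑ i, ∑ j, Atil B i j)
    (B : Matrix (Fin m) (Fin p) ℝ) :
    ∃ L : Matrix (Fin m) (Fin p) ℝ →L[ℝ] ℝ,
      HasFDerivAt f L B ∧
        ∀ H : Matrix (Fin m) (Fin p) ℝ, L H = ((Xᵀ * (Y - Atil B))ᵀ * H).trace := by
  classical
  -- the continuous linear map `B ↦ (X*B) i j`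
  let ℓ : Fin n → Fin p → (Matrix (Fin m) (Fin p) ℝ →L[ℝ] ℝ) := fun i j =>
    LinearMap.toContinuousLinearMap
      { toFun := fun A => (X * A) i j
        map_add' := by intro A C; simp [Matrix.mul_add]
        map_smul' := by intro c A; simp [Matrix.mul_smul] }
  have hℓ : ∀ i j (H : Matrix (Fin m) (Fin p) ℝ), ℓ i j H = (X * H) i j := fun _ _ _ => rfl
  have hterm : ∀ i j, HasFDerivAt (fun A => Y i j * (X * A) i j - Atil A i j)
      (((Y - Atil B) i j) • ℓ i j) B := by
    intro i j
    have h1 : HasFDerivAt (fun A => (X * A) i j) (ℓ i j) B :=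
      (ℓ i j).hasFDerivAt
    have h2 : HasFDerivAt (fun A => Y i j * (X * A) i j) ((Y i j) • ℓ i j) B :=
      h1.const_mul _
    have h3 : HasFDerivAt (fun A => Atil A i j) ((Atil B i j) • ℓ i j) B := by
      have hg : HasFDerivAt
          (fun A : Matrix (Fin m) (Fin p) ℝ =>
            O i j + (X * A) i j + M i j + (S i j) ^ 2 / 2) (ℓ i j) B := by
        exact ((h1.const_add (O i j)).add_const (M i j)).add_const ((S i j) ^ 2 / 2)
      have he := hg.exp
      have heq : (fun A => Atil A i j) =
          fun A : Matrix (Fin m) (Fin p) ℝ =>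
            Real.exp (O i j + (X * A) i j + M i j + (S i j) ^ 2 / 2) :=
        funext fun A => hAtil A i j
      rw [heq, hAtil]
      exact he
    have h4 := h2.sub h3
    have h5 : (Y - Atil B) i j • ℓ i j = Y i j • ℓ i j - Atil B i j • ℓ i j := by
      rw [Matrix.sub_apply]; module
    rw [h5]
    exact h4
  have hsum : HasFDerivAt
      (fun A => ∑ i, ∑ j, (Y i j * (X * A) i j - Atil A i j))
      (∑ i, ∑ j, ((Y - Atil B) i j) • ℓ i j) B :=
    HasFDerivAt.fun_sum fun i _ => HasFDerivAt.fun_sum fun j _ => hterm i j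
  have hfe : f = fun A => ∑ i, ∑ j, (Y i j * (X * A) i j - Atil A i j) := by
    funext A
    rw [hf]
    rw [show (Yᵀ * (X * A)).trace = ∑ i, ∑ j, Y i j * (X * A) i j by
      simp only [Matrix.trace, Matrix.diag, Matrix.mul_apply, Matrix.transpose_apply]
      exact Finset.sum_comm]
    rw [← Finset.sum_sub_distrib]
    exact Finset.sum_congr rfl fun i _ => (Finset.sum_sub_distrib _ _).symm
  refine ⟨∑ i, ∑ j, ((Y - Atil B) i j) • ℓ i j, by rw [hfe]; exact hsum, ?_⟩
  intro H
  simp only [ContinuousLinearMap.coe_sum', Finset.sum_apply,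
    ContinuousLinearMap.coe_smul', Pi.smul_apply, hℓ, smul_eq_mul]
  simp only [Matrix.trace, Matrix.diag, Matrix.mul_apply, Matrix.transpose_apply,
    Matrix.sub_apply, Finset.sum_mul, Finset.mul_sum]
  rw [Finset.sum_comm]
  refine Finset.sum_congr rfl fun i _ => ?_
  rw [Finset.sum_comm]
  exact Finset.sum_congr rfl fun j _ => Finset.sum_congr rfl fun k _ => by ring
end

section
/- Let n, p, m be positive integers, Y, O, M, S real n×p matrices and X a real n×m matrix. For a real m×p matrix B define Ã(B)_{ij} = exp(O_{ij} + (XB)_{ij} + M_{ij} + S_{ij}²/2) and f(B) = Tr(Yᵀ(XB)) − Σ_{i,j} Ã(B)_{ij}. Then f is twice differentiable at every B, and its second derivative at B, evaluated at directions H, K (real m×p matrices), equals −Σ_{i=1}^n Σ_{j=1}^p Ã(B)_{ij} (XH)_{ij} (XK)_{ij}. In particular, the Hessian quadratic form of f is negative semidefinite, and in vectorized coordinates it equals −(I_p ⊗ Xᵀ) Diag(vec(Ã(B))) (I_p ⊗ X). -/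
open Matrix Kronecker

attribute [local instance] Matrix.normedAddCommGroup Matrix.normedSpace

noncomputable def plnLin (n p m : ℕ) (X : Matrix (Fin n) (Fin m) ℝ) (i : Fin n) (j : Fin p) :
    Matrix (Fin m) (Fin p) ℝ →L[ℝ] ℝ :=
  LinearMap.toContinuousLinearMap
    { toFun := fun B => (X * B) i j
      map_add' := fun B C => by simp [Matrix.mul_add]
      map_smul' := fun c B => by simp [Matrix.mul_smul] }

@[simp] lemma plnLin_apply (n p m : ℕ) (X : Matrix (Fin n) (Fin m) ℝ) (i : Fin n) (j : Fin p)
    (B : Matrix (Fin m) (Fin p) ℝ) : plnLin n p m X i j B = (X * B) i j := rfl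

noncomputable def plnTr (n p m : ℕ) (Y : Matrix (Fin n) (Fin p) ℝ) (X : Matrix (Fin n) (Fin m) ℝ) :
    Matrix (Fin m) (Fin p) ℝ →L[ℝ] ℝ :=
  LinearMap.toContinuousLinearMap
    { toFun := fun B => (Yᵀ * (X * B)).trace
      map_add' := fun B C => by simp [Matrix.mul_add, Matrix.trace_add]
      map_smul' := fun c B => by simp [Matrix.mul_smul, Matrix.trace_smul] }

/-- the Hessian of the B-dependent part of the PLN ELBO
`f(B) = Tr(Yᵀ(XB)) − Σ_{ij} Ã(B)_{ij}` is, in directions `H, K`,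
`−Σ_{ij} Ã(B)_{ij} (XH)_{ij} (XK)_{ij}`; it is negative semidefinite and in
vectorized coordinates equals `−(I_p ⊗ Xᵀ) Diag(vec Ã(B)) (I_p ⊗ X)`. -/
theorem pln_elbo_hessian_B
    (n p m : ℕ) (hn : 0 < n) (hp : 0 < p) (hm : 0 < m)
    (Y O M S : Matrix (Fin n) (Fin p) ℝ) (X : Matrix (Fin n) (Fin m) ℝ)
    (Atil : Matrix (Fin m) (Fin p) ℝ → Matrix (Fin n) (Fin p) ℝ)
    (hAtil : ∀ B i j, Atil B i j = Real.exp (O i j + (X * B) i j + M i j + (S i j) ^ 2 / 2))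
    (f : Matrix (Fin m) (Fin p) ℝ → ℝ)
    (hf : ∀ B, f B = (Yᵀ * (X * B)).trace - ∑ i, ∑ j, Atil B i j)
    (B : Matrix (Fin m) (Fin p) ℝ) :
    DifferentiableAt ℝ f B ∧
    ∃ f'' : Matrix (Fin m) (Fin p) ℝ →L[ℝ] Matrix (Fin m) (Fin p) ℝ →L[ℝ] ℝ,
      HasFDerivAt (fderiv ℝ f) f'' B ∧
      (∀ H K : Matrix (Fin m) (Fin p) ℝ,
        f'' H K = -∑ i, ∑ j, Atil B i j * (X * H) i j * (X * K) i j) ∧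
      (∀ H : Matrix (Fin m) (Fin p) ℝ, f'' H H ≤ 0) ∧
      (∀ H K : Matrix (Fin m) (Fin p) ℝ,
        f'' H K =
          (fun q : Fin p × Fin m => H q.2 q.1) ⬝ᵥ
            ((-(((1 : Matrix (Fin p) (Fin p) ℝ) ⊗ₖ Xᵀ) *
                Matrix.diagonal (fun q : Fin p × Fin n => Atil B q.2 q.1) *
                ((1 : Matrix (Fin p) (Fin p) ℝ) ⊗ₖ X))) *ᵥ
              (fun q : Fin p × Fin m => K q.2 q.1))) := by
  set ℓ := plnLin n p m X with hℓdef
  set T := plnTr n p m Y X with hTdef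
  -- derivative of each exponential term
  have hterm : ∀ (i : Fin n) (j : Fin p) (B' : Matrix (Fin m) (Fin p) ℝ),
      HasFDerivAt (fun B0 => Atil B0 i j) (Atil B' i j • ℓ i j) B' := by
    intro i j B'
    have he : (fun B0 => Atil B0 i j)
        = fun B0 => Real.exp (O i j + ℓ i j B0 + M i j + S i j ^ 2 / 2) := by
      funext B0; rw [hAtil]; rfl
    rw [he]
    have h1 : HasFDerivAt (fun B0 => O i j + ℓ i j B0 + M i j + S i j ^ 2 / 2) (ℓ i j) B' := by
      exact (((ℓ i j).hasFDerivAt.const_add (O i j)).add_const (M i j)).add_const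
        (S i j ^ 2 / 2)
    have h2 := h1.exp
    rw [hAtil, show (X * B') i j = ℓ i j B' from rfl]
    exact h2
  have hD : ∀ B' : Matrix (Fin m) (Fin p) ℝ,
      HasFDerivAt f (T - ∑ i, ∑ j, Atil B' i j • ℓ i j) B' := by
    intro B'
    have hfe : f = fun B0 => T B0 - ∑ i, ∑ j, Atil B0 i j := by
      funext B0; rw [hf]; rfl
    rw [hfe]
    exact T.hasFDerivAt.sub
      (HasFDerivAt.fun_sum fun i _ => HasFDerivAt.fun_sum fun j _ => hterm i j B')
  have hfder : fderiv ℝ f = fun B' => T - ∑ i, ∑ j, Atil B' i j • ℓ i j :=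
    funext fun B' => (hD B').fderiv
  refine ⟨(hD B).differentiableAt,
    -∑ i, ∑ j, ((Atil B i j • ℓ i j).smulRight (ℓ i j)), ?_, ?_, ?_, ?_⟩
  · rw [hfder]
    letI : NormedAddCommGroup (Matrix (Fin m) (Fin p) ℝ →L[ℝ] ℝ) := ContinuousLinearMap.toNormedAddCommGroup
    letI : NormedSpace ℝ (Matrix (Fin m) (Fin p) ℝ →L[ℝ] ℝ) := ContinuousLinearMap.toNormedSpace
    have h3 : HasFDerivAt (fun B' => T - ∑ i, ∑ j, Atil B' i j • ℓ i j)
        ((0 : Matrix (Fin m) (Fin p) ℝ →L[ℝ] Matrix (Fin m) (Fin p) ℝ →L[ℝ] ℝ)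
          - ∑ i, ∑ j, ((Atil B i j • ℓ i j).smulRight (ℓ i j))) B :=
      (hasFDerivAt_const T B).sub
        (HasFDerivAt.fun_sum fun i _ => HasFDerivAt.fun_sum fun j _ =>
          @HasFDerivAt.smul_const _ _ _ _ _ _ _ _ _ ℝ _ _ _ _
            (by exact IsScalarTower.left ℝ) _ _ (hterm i j B) (ℓ i j))
    convert h3 using 1
    ext H K
    simp [ContinuousLinearMap.sum_apply]
  · intro H K
    simp [hℓdef, ContinuousLinearMap.sum_apply, mul_assoc]
  · intro H
    have : (0:ℝ) ≤ ∑ i, ∑ j, Atil B i j * (X * H) i j * (X * H) i j := by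
      refine Finset.sum_nonneg fun i _ => Finset.sum_nonneg fun j _ => ?_
      rw [mul_assoc]
      exact mul_nonneg (by rw [hAtil]; exact (Real.exp_nonneg _)) (mul_self_nonneg _)
    have h4 : ((-∑ i, ∑ j, ((Atil B i j • ℓ i j).smulRight (ℓ i j))) H) H
        = -∑ i, ∑ j, Atil B i j * (X * H) i j * (X * H) i j := by
      simp [hℓdef, ContinuousLinearMap.sum_apply, mul_assoc]
    rw [h4]
    linarith
  · intro H K
    have h5 : ((-∑ i, ∑ j, ((Atil B i j • ℓ i j).smulRight (ℓ i j))) H) K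
        = -∑ i, ∑ j, Atil B i j * (X * H) i j * (X * K) i j := by
      simp [hℓdef, ContinuousLinearMap.sum_apply, mul_assoc]
    rw [h5]
    rw [Matrix.neg_mulVec, dotProduct_neg, neg_inj]
    have hM : ∀ jk j'k' : Fin p × Fin m,
        ((((1 : Matrix (Fin p) (Fin p) ℝ) ⊗ₖ Xᵀ) *
            Matrix.diagonal (fun q : Fin p × Fin n => Atil B q.2 q.1) *
            ((1 : Matrix (Fin p) (Fin p) ℝ) ⊗ₖ X)) jk j'k')
          = if jk.1 = j'k'.1 then ∑ i : Fin n, X i jk.2 * Atil B i jk.1 * X i j'k'.2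
            else 0 := by
      rintro ⟨j, k⟩ ⟨j', k'⟩
      rw [Matrix.mul_assoc]
      simp only [Matrix.mul_apply, Matrix.diagonal_mul, Matrix.kroneckerMap_apply,
        Matrix.one_apply, Matrix.transpose_apply, Fintype.sum_prod_type, ite_mul, mul_ite,
        zero_mul, mul_zero, one_mul, Finset.sum_ite_eq, Finset.mem_univ, if_true]
      by_cases hjj : j = j'
      · subst hjj
        rw [if_pos rfl]
        simp [Matrix.diagonal_apply, Prod.mk.injEq, ite_and, mul_ite, mul_zero, ite_mul,
          zero_mul, Finset.sum_ite_eq, Finset.sum_ite_eq', Finset.mem_univ, if_true,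
          mul_comm, mul_left_comm]
      · simp [hjj]
    simp only [Matrix.mulVec, dotProduct, Fintype.sum_prod_type, hM]
    simp only [mul_ite, ite_mul, mul_zero, zero_mul, Finset.sum_ite_eq, Finset.mem_univ,
      if_true]
    rw [Finset.sum_comm]
    refine Finset.sum_congr rfl fun j _ => ?_
    have hswap : ∀ g : Fin p → Fin m → ℝ,
        (∑ x1 : Fin p, ∑ x2 : Fin m, if j = x1 then g x1 x2 else 0) = ∑ x2 : Fin m, g j x2 := by
      intro g; rw [Finset.sum_comm]; simp
    simp only [hswap]
    simp only [Matrix.mul_apply, Finset.mul_sum, Finset.sum_mul]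
    rw [Finset.sum_comm]
    rw [show (∑ x : Fin m, ∑ x_1 : Fin m, ∑ i : Fin n, H x j * (X i x * Atil B i j * X i x_1 * K x_1 j))
        = ∑ x_1 : Fin m, ∑ x : Fin m, ∑ i : Fin n, H x j * (X i x * Atil B i j * X i x_1 * K x_1 j)
      from Finset.sum_comm]
    refine Finset.sum_congr rfl fun a _ => ?_
    rw [Finset.sum_comm]
    refine Finset.sum_congr rfl fun b _ => ?_
    refine Finset.sum_congr rfl fun c _ => ?_
    ring
end

section
/- Let p be a positive integer, c ∈ ℝᵖ, Y ∈ ℝᵖ, and Ω a symmetric positive semidefinite real p×p matrix whose diagonal entries are strictly positive. Define J on ℝᵖ × (0,∞)ᵖ by J(m, s) = Σ_{j=1}^p [ Y_j m_j − exp(c_j + m_j + s_j²/2) + log s_j − (1/2) Ω_{jj} s_j² ] − (1/2) mᵀ Ω m. Then J is strictly concave on the convex set ℝᵖ × (0,∞)ᵖ. -/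
open Matrix

private lemma pln_sq_combo {b b' t t' : ℝ} (ht : 0 ≤ t) (ht' : 0 ≤ t')
    (htt : t + t' = 1) : (t * b + t' * b') ^ 2 ≤ t * b ^ 2 + t' * b' ^ 2 := by
  nlinarith [sq_nonneg (b - b'), mul_nonneg ht ht']

private lemma pln_exp_combo {x x' t t' : ℝ} (ht : 0 ≤ t) (ht' : 0 ≤ t')
    (htt : t + t' = 1) :
    Real.exp (t * x + t' * x') ≤ t * Real.exp x + t' * Real.exp x' := by
  have := convexOn_exp.2 (Set.mem_univ x) (Set.mem_univ x') ht ht' htt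
  simpa [smul_eq_mul] using this

private lemma pln_exp_combo_strict {x x' t t' : ℝ} (ht : 0 < t) (ht' : 0 < t')
    (htt : t + t' = 1) (hne : x ≠ x') :
    Real.exp (t * x + t' * x') < t * Real.exp x + t' * Real.exp x' := by
  have := strictConvexOn_exp.2 (Set.mem_univ x) (Set.mem_univ x') hne ht ht' htt
  simpa [smul_eq_mul] using this

/-- weak concavity of a single coordinate term -/
private lemma pln_term_le (cj Yj k a a' b b' t t' : ℝ) (hk : 0 ≤ k)
    (hb : 0 < b) (hb' : 0 < b') (ht : 0 < t) (ht' : 0 < t') (htt : t + t' = 1) :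
    t * (Yj * a - Real.exp (cj + a + b ^ 2 / 2) + Real.log b - 1/2 * k * b ^ 2)
      + t' * (Yj * a' - Real.exp (cj + a' + b' ^ 2 / 2) + Real.log b' - 1/2 * k * b' ^ 2)
    ≤ Yj * (t * a + t' * a')
      - Real.exp (cj + (t * a + t' * a') + (t * b + t' * b') ^ 2 / 2)
      + Real.log (t * b + t' * b') - 1/2 * k * (t * b + t' * b') ^ 2 := by
  have hsq := pln_sq_combo (b := b) (b' := b') ht.le ht'.le htt
  have h1 : Real.exp (cj + (t * a + t' * a') + (t * b + t' * b') ^ 2 / 2)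
      ≤ Real.exp (t * (cj + a + b ^ 2 / 2) + t' * (cj + a' + b' ^ 2 / 2)) := by
    apply Real.exp_le_exp.2
    have ht'' : t' = 1 - t := by linarith
    subst ht''
    nlinarith [hsq]
  have h2 := pln_exp_combo (x := cj + a + b ^ 2 / 2) (x' := cj + a' + b' ^ 2 / 2)
    ht.le ht'.le htt
  have h3 : t * Real.log b + t' * Real.log b' ≤ Real.log (t * b + t' * b') := by
    have := strictConcaveOn_log_Ioi.concaveOn.2 (Set.mem_Ioi.2 hb) (Set.mem_Ioi.2 hb')
      ht.le ht'.le htt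
    simpa [smul_eq_mul] using this
  have h4 : k * (t * b + t' * b') ^ 2 ≤ k * (t * b ^ 2 + t' * b' ^ 2) :=
    mul_le_mul_of_nonneg_left hsq hk
  nlinarith [h1, h2, h3, h4]

/-- strict concavity of a single coordinate term -/
private lemma pln_term_lt (cj Yj k a a' b b' t t' : ℝ) (hk : 0 ≤ k)
    (hb : 0 < b) (hb' : 0 < b') (ht : 0 < t) (ht' : 0 < t') (htt : t + t' = 1)
    (hne : a ≠ a' ∨ b ≠ b') :
    t * (Yj * a - Real.exp (cj + a + b ^ 2 / 2) + Real.log b - 1/2 * k * b ^ 2)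
      + t' * (Yj * a' - Real.exp (cj + a' + b' ^ 2 / 2) + Real.log b' - 1/2 * k * b' ^ 2)
    < Yj * (t * a + t' * a')
      - Real.exp (cj + (t * a + t' * a') + (t * b + t' * b') ^ 2 / 2)
      + Real.log (t * b + t' * b') - 1/2 * k * (t * b + t' * b') ^ 2 := by
  have hsq := pln_sq_combo (b := b) (b' := b') ht.le ht'.le htt
  have h1 : Real.exp (cj + (t * a + t' * a') + (t * b + t' * b') ^ 2 / 2)
      ≤ Real.exp (t * (cj + a + b ^ 2 / 2) + t' * (cj + a' + b' ^ 2 / 2)) := by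
    apply Real.exp_le_exp.2
    have ht'' : t' = 1 - t := by linarith
    subst ht''
    nlinarith [hsq]
  have h4 : k * (t * b + t' * b') ^ 2 ≤ k * (t * b ^ 2 + t' * b' ^ 2) :=
    mul_le_mul_of_nonneg_left hsq hk
  by_cases hbb : b = b'
  · subst hbb
    have ha : a ≠ a' := by tauto
    have hxne : cj + a + b ^ 2 / 2 ≠ cj + a' + b ^ 2 / 2 := by
      intro h; exact ha (by linarith)
    have h2 := pln_exp_combo_strict (x := cj + a + b ^ 2 / 2) (x' := cj + a' + b ^ 2 / 2)
      ht ht' htt hxne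
    have hb2 : t * b + t' * b = b := by
      rw [← add_mul, htt, one_mul]
    have h3 : t * Real.log b + t' * Real.log b = Real.log b := by
      rw [← add_mul, htt, one_mul]
    rw [hb2] at h1 h4
    rw [hb2]
    have ht'' : t' = 1 - t := by linarith
    subst ht''
    nlinarith [h1, h2, h3, h4]
  · have h2 := pln_exp_combo (x := cj + a + b ^ 2 / 2) (x' := cj + a' + b' ^ 2 / 2)
      ht.le ht'.le htt
    have h3 : t * Real.log b + t' * Real.log b' < Real.log (t * b + t' * b') := by
      have := strictConcaveOn_log_Ioi.2 (Set.mem_Ioi.2 hb) (Set.mem_Ioi.2 hb')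
        hbb ht ht' htt
      simpa [smul_eq_mul] using this
    nlinarith [h1, h2, h3, h4]

/-- concavity of the quadratic form term -/
private lemma pln_quad_le {p : ℕ} (Ω : Matrix (Fin p) (Fin p) ℝ)
    (hΩ : Ω.PosSemidef) (u v : Fin p → ℝ) (t t' : ℝ)
    (ht : 0 ≤ t) (ht' : 0 ≤ t') (htt : t + t' = 1) :
    (t • u + t' • v) ⬝ᵥ Ω.mulVec (t • u + t' • v)
      ≤ t * (u ⬝ᵥ Ω.mulVec u) + t' * (v ⬝ᵥ Ω.mulVec v) := by
  have hsym : ∀ x y : Fin p → ℝ, x ⬝ᵥ Ω.mulVec y = y ⬝ᵥ Ω.mulVec x := by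
    intro x y
    rw [dotProduct_mulVec, ← mulVec_transpose]
    rw [show Ωᵀ = Ω from by
      have := hΩ.1; rwa [Matrix.IsHermitian, conjTranspose_eq_transpose_of_trivial] at this]
    exact dotProduct_comm _ _
  have hpsd : 0 ≤ (u - v) ⬝ᵥ Ω.mulVec (u - v) := by
    have := hΩ.dotProduct_mulVec_nonneg (u - v); simpa using this
  have hexp : (u - v) ⬝ᵥ Ω.mulVec (u - v)
      = u ⬝ᵥ Ω.mulVec u - 2 * (u ⬝ᵥ Ω.mulVec v) + v ⬝ᵥ Ω.mulVec v := by
    rw [mulVec_sub, sub_dotProduct, dotProduct_sub, dotProduct_sub, hsym v u]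
    ring
  have hexp2 : (t • u + t' • v) ⬝ᵥ Ω.mulVec (t • u + t' • v)
      = t ^ 2 * (u ⬝ᵥ Ω.mulVec u) + 2 * t * t' * (u ⬝ᵥ Ω.mulVec v)
        + t' ^ 2 * (v ⬝ᵥ Ω.mulVec v) := by
    rw [mulVec_add, mulVec_smul, mulVec_smul, add_dotProduct, smul_dotProduct,
      smul_dotProduct, dotProduct_add, dotProduct_add, dotProduct_smul,
      dotProduct_smul, dotProduct_smul, dotProduct_smul, hsym v u]
    simp only [smul_eq_mul]; ring
  rw [hexp] at hpsd
  have ht'' : t' = 1 - t := by linarith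
  subst ht''
  nlinarith [mul_nonneg (mul_nonneg ht ht') hpsd, hexp2]

/-- the single-observation PLN ELBO
`J(m, s) = Σ_j [Y_j m_j − exp(c_j + m_j + s_j²/2) + log s_j − (1/2) Ω_jj s_j²]
          − (1/2) mᵀ Ω m`
is strictly concave on `ℝᵖ × (0,∞)ᵖ` when `Ω` is symmetric positive
semidefinite with strictly positive diagonal entries. -/
theorem pln_elbo_strict_concave
    (p : ℕ) (hp : 0 < p) (c Y : Fin p → ℝ)
    (Ω : Matrix (Fin p) (Fin p) ℝ) (hΩ : Ω.PosSemidef) (hdiag : ∀ j, 0 < Ω j j)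
    (J : (Fin p → ℝ) × (Fin p → ℝ) → ℝ)
    (hJ : ∀ m s : Fin p → ℝ,
      J (m, s) = ∑ j, (Y j * m j - Real.exp (c j + m j + (s j) ^ 2 / 2)
          + Real.log (s j) - (1 / 2 : ℝ) * Ω j j * (s j) ^ 2)
        - (1 / 2 : ℝ) * (m ⬝ᵥ Ω.mulVec m)) :
    StrictConcaveOn ℝ {ms : (Fin p → ℝ) × (Fin p → ℝ) | ∀ j, 0 < ms.2 j} J := by
  constructor
  · intro x hx y hy a b ha hb hab
    intro j
    show 0 < a * x.2 j + b * y.2 j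
    have hxj := hx j; have hyj := hy j
    rcases eq_or_lt_of_le ha with ha' | ha'
    · have hb1 : b = 1 := by linarith
      rw [← ha', hb1]; simpa using hyj
    · have h0 : 0 ≤ b * y.2 j := mul_nonneg hb hyj.le
      nlinarith
  · intro x hx y hy hxy a b ha hb hab
    have hdiff : ∃ j, x.1 j ≠ y.1 j ∨ x.2 j ≠ y.2 j := by
      by_contra h
      push_neg at h
      exact hxy (Prod.ext (funext fun j => (h j).1) (funext fun j => (h j).2))
    obtain ⟨j0, hj0⟩ := hdiff
    have hJx : J x = _ := hJ x.1 x.2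
    have hJy : J y = _ := hJ y.1 y.2
    have hJw : J (a • x + b • y) = _ := hJ (a • x.1 + b • y.1) (a • x.2 + b • y.2)
    rw [smul_eq_mul, smul_eq_mul, hJx, hJy, hJw]
    set f : ((Fin p → ℝ) × (Fin p → ℝ)) → Fin p → ℝ := fun w j =>
      Y j * w.1 j - Real.exp (c j + w.1 j + (w.2 j) ^ 2 / 2)
        + Real.log (w.2 j) - (1 / 2 : ℝ) * Ω j j * (w.2 j) ^ 2 with hf
    have hsum : ∑ j, (a * f x j + b * f y j)
        < ∑ j, (Y j * (a • x.1 + b • y.1) j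
            - Real.exp (c j + (a • x.1 + b • y.1) j + ((a • x.2 + b • y.2) j) ^ 2 / 2)
            + Real.log ((a • x.2 + b • y.2) j)
            - (1 / 2 : ℝ) * Ω j j * ((a • x.2 + b • y.2) j) ^ 2) := by
      apply Finset.sum_lt_sum
      · intro j _
        have := pln_term_le (c j) (Y j) (Ω j j) (x.1 j) (y.1 j) (x.2 j) (y.2 j)
          a b (hdiag j).le (hx j) (hy j) ha hb hab
        simpa [hf, Pi.add_apply, Pi.smul_apply, smul_eq_mul] using this
      · refine ⟨j0, Finset.mem_univ _, ?_⟩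
        have := pln_term_lt (c j0) (Y j0) (Ω j0 j0) (x.1 j0) (y.1 j0) (x.2 j0) (y.2 j0)
          a b (hdiag j0).le (hx j0) (hy j0) ha hb hab hj0
        simpa [hf, Pi.add_apply, Pi.smul_apply, smul_eq_mul] using this
    have hquad := pln_quad_le Ω hΩ x.1 y.1 a b ha.le hb.le hab
    have hsplit : ∑ j, (a * f x j + b * f y j)
        = a * ∑ j, f x j + b * ∑ j, f y j := by
      rw [Finset.sum_add_distrib, ← Finset.mul_sum, ← Finset.mul_sum]
    have hfx : ∑ j, f x j = ∑ j, (Y j * x.1 j - Real.exp (c j + x.1 j + (x.2 j) ^ 2 / 2)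
        + Real.log (x.2 j) - (1 / 2 : ℝ) * Ω j j * (x.2 j) ^ 2) := rfl
    have hfy : ∑ j, f y j = ∑ j, (Y j * y.1 j - Real.exp (c j + y.1 j + (y.2 j) ^ 2 / 2)
        + Real.log (y.2 j) - (1 / 2 : ℝ) * Ω j j * (y.2 j) ^ 2) := rfl
    rw [← hfx, ← hfy]
    nlinarith [hsum, hquad, hsplit]
end

section
/- Let p be a positive integer, c ∈ ℝᵖ, Y ∈ ℝᵖ with nonnegative entries, and Ω a symmetric positive definite real p×p matrix. Define J on ℝᵖ × (0,∞)ᵖ by J(m, s) = Σ_{j=1}^p [ Y_j m_j − exp(c_j + m_j + s_j²/2) + log s_j − (1/2) Ω_{jj} s_j² ] − (1/2) mᵀ Ω m. Then J attains a global maximum on ℝᵖ × (0,∞)ᵖ, and the maximizer is unique: there exists a unique (m̂, ŝ) ∈ ℝᵖ × (0,∞)ᵖ such that J(m, s) ≤ J(m̂, ŝ) for all (m, s) ∈ ℝᵖ × (0,∞)ᵖ. -/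
open Matrix


private lemma exp_mid (x y : ℝ) : Real.exp ((x+y)/2) ≤ (Real.exp x + Real.exp y)/2 := by
  have h1 : Real.exp x = Real.exp (x/2) * Real.exp (x/2) := by rw [← Real.exp_add]; ring_nf
  have h2 : Real.exp y = Real.exp (y/2) * Real.exp (y/2) := by rw [← Real.exp_add]; ring_nf
  have h3 : Real.exp ((x+y)/2) = Real.exp (x/2) * Real.exp (y/2) := by rw [← Real.exp_add]; ring_nf
  nlinarith [sq_nonneg (Real.exp (x/2) - Real.exp (y/2))]

private lemma quad_coer {lam t a C : ℝ} (hl : 0 < lam) (ha : 0 ≤ a)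
    (h : lam/2*t^2 - a*t ≤ C) : t ≤ 2*(a+|C|+1)/lam + 1 := by
  by_contra hc
  push_neg at hc
  have h1 : lam * t > 2*(a+|C|+1) := by
    rw [gt_iff_lt, ← div_lt_iff₀' hl]
    nlinarith [abs_nonneg C]
  have h2 : t > 1 := by
    have : 0 ≤ 2*(a+|C|+1)/lam := by positivity
    linarith
  nlinarith [le_abs_self C, abs_nonneg C]

private lemma lin_quad {l a t : ℝ} (hl : 0 < l) : a*t - l/2*t^2 ≤ a^2/(2*l) := by
  rw [le_div_iff₀ (by linarith)]
  nlinarith [sq_nonneg (l*t - a)]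

private lemma logterm_le {w s : ℝ} (hw : 0 < w) (hs : 0 < s) :
    Real.log s - 1/2*w*s^2 ≤ 1/(2*w) := by
  have hlog : Real.log s ≤ s - 1 := Real.log_le_sub_one_of_pos hs
  rw [le_div_iff₀ (by linarith)]
  nlinarith [sq_nonneg (w*s - 1)]

private lemma log_mid {a b : ℝ} (ha : 0 < a) (hb : 0 < b) (hne : a ≠ b) :
    (Real.log a + Real.log b)/2 < Real.log ((a+b)/2) := by
  have := strictConcaveOn_log_Ioi.2 (Set.mem_Ioi.2 ha) (Set.mem_Ioi.2 hb) hne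
    (by norm_num : (0:ℝ) < 1/2) (by norm_num : (0:ℝ) < 1/2) (by norm_num)
  simp only [smul_eq_mul] at this
  calc (Real.log a + Real.log b)/2 = 1/2 * Real.log a + 1/2 * Real.log b := by ring
    _ < Real.log (1/2*a + 1/2*b) := this
    _ = Real.log ((a+b)/2) := by ring_nf

private lemma log_mid_le {a b : ℝ} (ha : 0 < a) (hb : 0 < b) :
    (Real.log a + Real.log b)/2 ≤ Real.log ((a+b)/2) := by
  rcases eq_or_ne a b with rfl | hne
  · have : (a + a)/2 = a := by ring
    rw [this]; linarith
  · exact (log_mid ha hb hne).le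

private lemma exp_part_mid (cc a1 b1 a2 b2 : ℝ) :
    Real.exp (cc + (a1+b1)/2 + ((a2+b2)/2)^2/2)
      ≤ (Real.exp (cc + a1 + a2^2/2) + Real.exp (cc + b1 + b2^2/2))/2 := by
  calc Real.exp (cc + (a1+b1)/2 + ((a2+b2)/2)^2/2)
      ≤ Real.exp (((cc + a1 + a2^2/2) + (cc + b1 + b2^2/2))/2) := by
        apply Real.exp_le_exp.2
        nlinarith [sq_nonneg (a2 - b2)]
    _ ≤ _ := exp_mid _ _

private lemma term_mid_le {Yj cc w a1 b1 a2 b2 : ℝ} (hw : 0 < w)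
    (ha2 : 0 < a2) (hb2 : 0 < b2) :
    ((Yj*a1 - Real.exp (cc + a1 + a2^2/2) + Real.log a2 - 1/2*w*a2^2)
      + (Yj*b1 - Real.exp (cc + b1 + b2^2/2) + Real.log b2 - 1/2*w*b2^2))/2
    ≤ Yj*((a1+b1)/2) - Real.exp (cc + (a1+b1)/2 + ((a2+b2)/2)^2/2)
        + Real.log ((a2+b2)/2) - 1/2*w*((a2+b2)/2)^2 := by
  have hexp := exp_part_mid cc a1 b1 a2 b2
  have hlog := log_mid_le ha2 hb2
  have hsq : ((a2+b2)/2)^2 ≤ (a2^2 + b2^2)/2 := by nlinarith [sq_nonneg (a2-b2)]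
  nlinarith [mul_le_mul_of_nonneg_left hsq (by linarith : (0:ℝ) ≤ 1/2*w)]

private lemma term_mid_lt {Yj cc w a1 b1 a2 b2 : ℝ} (hw : 0 < w)
    (ha2 : 0 < a2) (hb2 : 0 < b2) (hne : a2 ≠ b2) :
    ((Yj*a1 - Real.exp (cc + a1 + a2^2/2) + Real.log a2 - 1/2*w*a2^2)
      + (Yj*b1 - Real.exp (cc + b1 + b2^2/2) + Real.log b2 - 1/2*w*b2^2))/2
    < Yj*((a1+b1)/2) - Real.exp (cc + (a1+b1)/2 + ((a2+b2)/2)^2/2)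
        + Real.log ((a2+b2)/2) - 1/2*w*((a2+b2)/2)^2 := by
  have hexp := exp_part_mid cc a1 b1 a2 b2
  have hlog := log_mid ha2 hb2 hne
  have hsq : ((a2+b2)/2)^2 ≤ (a2^2 + b2^2)/2 := by nlinarith [sq_nonneg (a2-b2)]
  nlinarith [mul_le_mul_of_nonneg_left hsq (by linarith : (0:ℝ) ≤ 1/2*w)]

private lemma posdef_diag_pos {p : ℕ} {Ω : Matrix (Fin p) (Fin p) ℝ} (hΩ : Ω.PosDef)
    (j : Fin p) : 0 < Ω j j := by
  have := hΩ.dotProduct_mulVec_pos (x := Pi.single j 1)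
    (by simp [Pi.single_apply])
  simpa [dotProduct, Matrix.mulVec, Pi.single_apply, Finset.sum_ite_eq'] using this

private lemma posdef_eigen_lb {p : ℕ} (hp : 0 < p) {Ω : Matrix (Fin p) (Fin p) ℝ}
    (hΩ : Ω.PosDef) : ∃ lam : ℝ, 0 < lam ∧ ∀ m : Fin p → ℝ, lam * ‖m‖^2 ≤ m ⬝ᵥ Ω *ᵥ m := by
  have hcont : Continuous (fun m : Fin p → ℝ => m ⬝ᵥ Ω *ᵥ m) := by
    simp only [dotProduct, Matrix.mulVec]; fun_prop
  haveI : Nonempty (Fin p) := ⟨⟨0, hp⟩⟩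
  have hne : (Metric.sphere (0 : Fin p → ℝ) 1).Nonempty :=
    NormedSpace.sphere_nonempty.2 zero_le_one
  obtain ⟨u, huS, hmin⟩ :=
    (isCompact_sphere (0 : Fin p → ℝ) 1).exists_isMinOn hne hcont.continuousOn
  have hu1 : ‖u‖ = 1 := by simpa using huS
  have hu0 : u ≠ 0 := by intro h; rw [h] at hu1; simp at hu1
  have hpos : 0 < u ⬝ᵥ Ω *ᵥ u := by simpa using hΩ.dotProduct_mulVec_pos hu0
  refine ⟨u ⬝ᵥ Ω *ᵥ u, hpos, fun m => ?_⟩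
  rcases eq_or_ne m 0 with rfl | hm
  · simp
  · have hnm : (0:ℝ) < ‖m‖ := norm_pos_iff.2 hm
    set v : Fin p → ℝ := ‖m‖⁻¹ • m with hv
    have hvS : v ∈ Metric.sphere (0 : Fin p → ℝ) 1 := by
      simp [hv, norm_smul, abs_of_pos (inv_pos.2 hnm), inv_mul_cancel₀ hnm.ne']
    have h1 := hmin hvS
    have h2 : v ⬝ᵥ Ω *ᵥ v = (‖m‖⁻¹)^2 * (m ⬝ᵥ Ω *ᵥ m) := by
      rw [hv, Matrix.mulVec_smul, smul_dotProduct, dotProduct_smul]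
      simp [smul_smul]; ring
    simp only [Set.mem_setOf_eq] at h1
    rw [h2] at h1
    have h3 : (‖m‖⁻¹)^2 = (‖m‖^2)⁻¹ := by rw [inv_pow]
    have h4 : 0 < ‖m‖^2 := by positivity
    calc u ⬝ᵥ Ω *ᵥ u * ‖m‖^2 ≤ ((‖m‖⁻¹)^2 * (m ⬝ᵥ Ω *ᵥ m)) * ‖m‖^2 := by nlinarith
      _ = m ⬝ᵥ Ω *ᵥ m := by field_simp [h3]

private lemma quad_mid_identity {p : ℕ} (Ω : Matrix (Fin p) (Fin p) ℝ) (a b : Fin p → ℝ) :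
    ((1/2 : ℝ) • (a + b)) ⬝ᵥ Ω *ᵥ ((1/2 : ℝ) • (a + b))
      = (a ⬝ᵥ Ω *ᵥ a + b ⬝ᵥ Ω *ᵥ b)/2
        - ((1/2 : ℝ) • (a - b)) ⬝ᵥ Ω *ᵥ ((1/2 : ℝ) • (a - b)) := by
  simp only [Matrix.mulVec_smul, smul_dotProduct, dotProduct_smul,
    Matrix.mulVec_add, Matrix.mulVec_sub, add_dotProduct, sub_dotProduct,
    dotProduct_add, dotProduct_sub, smul_eq_mul]
  ring_nf

/-- the single-observation PLN ELBO
`J(m, s) = Σ_j [Y_j m_j − exp(c_j + m_j + s_j²/2) + log s_j − (1/2) Ω_jj s_j²]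
          − (1/2) mᵀ Ω m`
attains a global maximum on `ℝᵖ × (0,∞)ᵖ`, and the maximizer is unique,
when `Y` has nonnegative entries and `Ω` is symmetric positive definite. -/
theorem pln_elbo_unique_maximizer
    (p : ℕ) (hp : 0 < p) (c Y : Fin p → ℝ) (hY : ∀ j, 0 ≤ Y j)
    (Ω : Matrix (Fin p) (Fin p) ℝ) (hΩ : Ω.PosDef)
    (J : (Fin p → ℝ) × (Fin p → ℝ) → ℝ)
    (hJ : ∀ m s : Fin p → ℝ,
      J (m, s) = ∑ j, (Y j * m j - Real.exp (c j + m j + (s j) ^ 2 / 2)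
          + Real.log (s j) - (1 / 2 : ℝ) * Ω j j * (s j) ^ 2)
        - (1 / 2 : ℝ) * (m ⬝ᵥ Ω.mulVec m)) :
    ∃! mshat : (Fin p → ℝ) × (Fin p → ℝ),
      (∀ j, 0 < mshat.2 j) ∧
        ∀ ms : (Fin p → ℝ) × (Fin p → ℝ), (∀ j, 0 < ms.2 j) → J ms ≤ J mshat := by
  classical
  haveI : Nonempty (Fin p) := ⟨⟨0, hp⟩⟩
  have hω : ∀ j, 0 < Ω j j := posdef_diag_pos hΩ
  obtain ⟨lam, hlam, hlamQ⟩ := posdef_eigen_lb hp hΩ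
  set SY : ℝ := ∑ j, Y j with hSYdef
  have hSY : 0 ≤ SY := Finset.sum_nonneg fun j _ => hY j
  clear_value SY
  set B : ℝ := ∑ j, 1/(2*Ω j j) with hBdef
  have hBj : ∀ j : Fin p, (0:ℝ) ≤ 1/(2*Ω j j) := fun j => by have := hω j; positivity
  clear_value B
  set M₀ : ℝ := J (0, fun _ => 1) with hM0def
  clear_value M₀
  -- coercive upper bound for J
  have hup : ∀ m s : Fin p → ℝ, (∀ j, 0 < s j) →
      J (m, s) ≤ SY*‖m‖ - lam/2*‖m‖^2
        + ∑ j, (Real.log (s j) - 1/2*Ω j j*(s j)^2) := by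
    intro m s hs
    rw [hJ]
    have h1 : ∀ j : Fin p, Y j * m j - Real.exp (c j + m j + (s j)^2/2) + Real.log (s j)
        - (1/2 : ℝ)*Ω j j*(s j)^2
        ≤ Y j * ‖m‖ + (Real.log (s j) - 1/2*Ω j j*(s j)^2) := by
      intro j
      have hmj : m j ≤ ‖m‖ :=
        le_trans (le_abs_self _) (by simpa [Real.norm_eq_abs] using norm_le_pi_norm m j)
      have he := Real.exp_pos (c j + m j + (s j)^2/2)
      have hY' := mul_le_mul_of_nonneg_left hmj (hY j)
      linarith
    calc (∑ j, (Y j * m j - Real.exp (c j + m j + (s j)^2/2) + Real.log (s j)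
            - (1/2 : ℝ)*Ω j j*(s j)^2)) - (1/2 : ℝ)*(m ⬝ᵥ Ω *ᵥ m)
        ≤ (∑ j, (Y j * ‖m‖ + (Real.log (s j) - 1/2*Ω j j*(s j)^2)))
            - (1/2 : ℝ)*(m ⬝ᵥ Ω *ᵥ m) :=
          sub_le_sub_right (Finset.sum_le_sum fun j _ => h1 j) _
      _ ≤ SY*‖m‖ - lam/2*‖m‖^2 + ∑ j, (Real.log (s j) - 1/2*Ω j j*(s j)^2) := by
          rw [Finset.sum_add_distrib, ← Finset.sum_mul, ← hSYdef]
          have := hlamQ m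
          linarith
  set E : ℝ := M₀ - B - SY^2/(2*lam) with hEdef
  clear_value E
  set eps : ℝ := min (Real.exp E) 1 with hepsdef
  clear_value eps
  have heps : 0 < eps := by rw [hepsdef]; exact lt_min (Real.exp_pos _) one_pos
  have heps1 : eps ≤ 1 := by rw [hepsdef]; exact min_le_right _ _
  set Rm : ℝ := 2*(SY + |B - M₀| + 1)/lam + 1 with hRmdef
  clear_value Rm
  set Rs : Fin p → ℝ := fun j => 2*(1 + |E| + 1)/Ω j j + 1 with hRsdef
  clear_value Rs
  have hRm0 : 0 ≤ Rm := by rw [hRmdef]; positivity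
  have hRs1 : ∀ j, 1 ≤ Rs j := fun j => by
    have h0 : 0 ≤ 2*(1 + |E| + 1)/Ω j j := by have := hω j; positivity
    simp only [hRsdef]; linarith
  -- key bounds on the superlevel set
  have hbound : ∀ m s : Fin p → ℝ, (∀ j, 0 < s j) → M₀ ≤ J (m, s) →
      ‖m‖ ≤ Rm ∧ ∀ j, eps ≤ s j ∧ s j ≤ Rs j := by
    intro m s hs hge
    have hup' := hup m s hs
    have hLsum : ∀ j : Fin p, Real.log (s j) - 1/2*Ω j j*(s j)^2 ≤ 1/(2*Ω j j) :=
      fun j => logterm_le (hω j) (hs j)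
    constructor
    · have h1 : ∑ j, (Real.log (s j) - 1/2*Ω j j*(s j)^2) ≤ ∑ j, 1/(2*Ω j j) :=
        Finset.sum_le_sum fun j _ => hLsum j
      have h2 : lam/2*‖m‖^2 - SY*‖m‖ ≤ B - M₀ := by
        have hb := hBdef.le
        linarith
      rw [hRmdef]
      exact quad_coer hlam hSY h2
    · intro j
      have hsplit : ∑ k, (Real.log (s k) - 1/2*Ω k k*(s k)^2)
          ≤ (Real.log (s j) - 1/2*Ω j j*(s j)^2) + B := by
        rw [← Finset.add_sum_erase _ _ (Finset.mem_univ j)]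
        have h3 : ∑ k ∈ Finset.univ.erase j, (Real.log (s k) - 1/2*Ω k k*(s k)^2)
            ≤ ∑ k ∈ Finset.univ.erase j, 1/(2*Ω k k) :=
          Finset.sum_le_sum fun k _ => hLsum k
        have h4 : ∑ k ∈ Finset.univ.erase j, 1/(2*Ω k k) ≤ ∑ k, 1/(2*Ω k k) :=
          Finset.sum_le_sum_of_subset_of_nonneg (Finset.subset_univ _)
            (fun k _ _ => hBj k)
        have := hBdef.ge
        linarith
      have hlin : SY*‖m‖ - lam/2*‖m‖^2 ≤ SY^2/(2*lam) := lin_quad hlam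
      have hLj : E ≤ Real.log (s j) - 1/2*Ω j j*(s j)^2 := by
        simp only [hEdef]; linarith
      constructor
      · have hlogj : E ≤ Real.log (s j) := by
          have hq : 0 ≤ 1/2*Ω j j*(s j)^2 := by have := hω j; positivity
          linarith only [hLj, hq]
        have h5 := Real.exp_le_exp.2 hlogj
        rw [Real.exp_log (hs j)] at h5
        rw [hepsdef]
        exact le_trans (min_le_left _ _) h5
      · have hls : Real.log (s j) ≤ s j - 1 := Real.log_le_sub_one_of_pos (hs j)
        have h3 : Ω j j/2*(s j)^2 - 1*(s j) ≤ |E| := by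
          have hnae := neg_abs_le E
          linarith only [hLj, hls, hnae]
        have h6 := quad_coer (hω j) zero_le_one h3
        rw [abs_abs] at h6
        simp only [hRsdef]
        exact h6
  -- compact box and maximizer on it
  set K : Set ((Fin p → ℝ) × (Fin p → ℝ)) :=
    Metric.closedBall 0 Rm ×ˢ Set.Icc (fun _ => eps) Rs with hKdef
  have hKc : IsCompact K := (isCompact_closedBall _ _).prod isCompact_Icc
  have hx0K : ((0 : Fin p → ℝ), fun _ => (1:ℝ)) ∈ K := by
    constructor
    · simpa [Metric.mem_closedBall] using hRm0
    · exact ⟨fun j => heps1, fun j => hRs1 j⟩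
  have hKpos : ∀ x ∈ K, ∀ j, 0 < x.2 j := fun x hx j => lt_of_lt_of_le heps (hx.2.1 j)
  have hJeq : J = fun x : (Fin p → ℝ) × (Fin p → ℝ) =>
      (∑ j, (Y j * x.1 j - Real.exp (c j + x.1 j + (x.2 j)^2/2) + Real.log (x.2 j)
          - (1/2:ℝ)*Ω j j*(x.2 j)^2)) - (1/2:ℝ)*(x.1 ⬝ᵥ Ω *ᵥ x.1) :=
    funext fun x => hJ x.1 x.2
  have hcont : ContinuousOn J K := by
    intro x hx
    apply ContinuousAt.continuousWithinAt
    rw [hJeq]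
    apply ContinuousAt.sub
    · apply tendsto_finset_sum
      intro j _
      have hlog : ContinuousAt
          (fun y : (Fin p → ℝ) × (Fin p → ℝ) => Real.log (y.2 j)) x :=
        ContinuousAt.log (by fun_prop) (ne_of_gt (hKpos x hx j))
      have hrest : ContinuousAt (fun y : (Fin p → ℝ) × (Fin p → ℝ) =>
          Y j * y.1 j - Real.exp (c j + y.1 j + (y.2 j)^2/2)) x := by fun_prop
      have hsq : ContinuousAt (fun y : (Fin p → ℝ) × (Fin p → ℝ) =>
          (1/2:ℝ)*Ω j j*(y.2 j)^2) x := by fun_prop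
      exact (hrest.add hlog).sub hsq
    · have hq : Continuous (fun y : (Fin p → ℝ) × (Fin p → ℝ) =>
          (1/2:ℝ)*(y.1 ⬝ᵥ Ω *ᵥ y.1)) := by
        simp only [dotProduct, Matrix.mulVec]; fun_prop
      exact hq.continuousAt
  obtain ⟨xh, hxhK, hxhmax⟩ := hKc.exists_isMaxOn ⟨_, hx0K⟩ hcont
  have hxh2 : ∀ j, 0 < xh.2 j := hKpos _ hxhK
  have hM0le : M₀ ≤ J xh := by rw [hM0def]; exact hxhmax hx0K
  have hglob : ∀ ms : (Fin p → ℝ) × (Fin p → ℝ), (∀ j, 0 < ms.2 j) → J ms ≤ J xh := by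
    intro ms hms
    by_cases hc : M₀ ≤ J ms
    · have hb := hbound ms.1 ms.2 hms hc
      have hmem : ms ∈ K := by
        constructor
        · simpa [Metric.mem_closedBall, dist_zero_right] using hb.1
        · exact ⟨fun j => (hb.2 j).1, fun j => (hb.2 j).2⟩
      exact hxhmax hmem
    · push_neg at hc
      linarith
  refine ⟨xh, ⟨hxh2, hglob⟩, ?_⟩
  rintro y ⟨hy2, hymax⟩
  by_contra hne
  have heq : J y = J xh := le_antisymm (hglob y hy2) (hymax xh hxh2)
  set mm : Fin p → ℝ := (1/2:ℝ) • (y.1 + xh.1) with hmm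
  set ss : Fin p → ℝ := fun j => (y.2 j + xh.2 j)/2 with hss
  have hmmj : ∀ j, mm j = (y.1 j + xh.1 j)/2 := fun j => by
    simp [hmm, Pi.smul_apply, Pi.add_apply, smul_eq_mul]; ring
  have hssj : ∀ j, ss j = (y.2 j + xh.2 j)/2 := fun j => by rw [hss]
  have hsspos : ∀ j, 0 < ss j := fun j => by
    have := hy2 j; have := hxh2 j
    simp only [hss]; positivity
  clear_value mm ss
  have hmid_le : J (mm, ss) ≤ J xh := hglob (mm, ss) hsspos
  -- quadratic part
  have hquad : mm ⬝ᵥ Ω *ᵥ mm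
      = (y.1 ⬝ᵥ Ω *ᵥ y.1 + xh.1 ⬝ᵥ Ω *ᵥ xh.1)/2
        - ((1/2:ℝ) • (y.1 - xh.1)) ⬝ᵥ Ω *ᵥ ((1/2:ℝ) • (y.1 - xh.1)) := by
    rw [hmm]
    exact quad_mid_identity Ω y.1 xh.1
  have hterm_le : ∀ j : Fin p,
      ((Y j * y.1 j - Real.exp (c j + y.1 j + (y.2 j)^2/2) + Real.log (y.2 j)
          - (1/2:ℝ)*Ω j j*(y.2 j)^2)
        + (Y j * xh.1 j - Real.exp (c j + xh.1 j + (xh.2 j)^2/2) + Real.log (xh.2 j)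
          - (1/2:ℝ)*Ω j j*(xh.2 j)^2))/2
      ≤ Y j * mm j - Real.exp (c j + mm j + (ss j)^2/2) + Real.log (ss j)
          - (1/2:ℝ)*Ω j j*(ss j)^2 := by
    intro j
    rw [hmmj j, hssj j]
    exact term_mid_le (hω j) (hy2 j) (hxh2 j)
  have hJy := hJ y.1 y.2
  have hJx := hJ xh.1 xh.2
  have hJm := hJ mm ss
  rw [Prod.mk.eta] at hJy hJx
  have hQD : 0 ≤ ((1/2:ℝ) • (y.1 - xh.1)) ⬝ᵥ Ω *ᵥ ((1/2:ℝ) • (y.1 - xh.1)) := by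
    rcases eq_or_ne (y.1 - xh.1) 0 with h0 | h0
    · simp [h0]
    · have hd0 : ((1/2:ℝ) • (y.1 - xh.1)) ≠ 0 := smul_ne_zero (by norm_num) h0
      have h2 := hΩ.dotProduct_mulVec_pos hd0
      simp only [star_trivial] at h2
      linarith
  have hsum_le : (∑ j, (Y j * y.1 j - Real.exp (c j + y.1 j + (y.2 j)^2/2)
        + Real.log (y.2 j) - (1/2:ℝ)*Ω j j*(y.2 j)^2)
      + ∑ j, (Y j * xh.1 j - Real.exp (c j + xh.1 j + (xh.2 j)^2/2)
        + Real.log (xh.2 j) - (1/2:ℝ)*Ω j j*(xh.2 j)^2))/2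
      ≤ ∑ j, (Y j * mm j - Real.exp (c j + mm j + (ss j)^2/2) + Real.log (ss j)
        - (1/2:ℝ)*Ω j j*(ss j)^2) := by
    rw [← Finset.sum_add_distrib, Finset.sum_div]
    exact Finset.sum_le_sum fun j _ => hterm_le j
  rcases eq_or_ne y.1 xh.1 with h1 | h1
  · -- m-parts equal, so some s-coordinate differs
    have h2 : y.2 ≠ xh.2 := fun h2 => hne (Prod.ext h1 h2)
    obtain ⟨j0, hj0⟩ := Function.ne_iff.1 h2
    have hsum_lt : (∑ j, (Y j * y.1 j - Real.exp (c j + y.1 j + (y.2 j)^2/2)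
          + Real.log (y.2 j) - (1/2:ℝ)*Ω j j*(y.2 j)^2)
        + ∑ j, (Y j * xh.1 j - Real.exp (c j + xh.1 j + (xh.2 j)^2/2)
          + Real.log (xh.2 j) - (1/2:ℝ)*Ω j j*(xh.2 j)^2))/2
        < ∑ j, (Y j * mm j - Real.exp (c j + mm j + (ss j)^2/2) + Real.log (ss j)
          - (1/2:ℝ)*Ω j j*(ss j)^2) := by
      rw [← Finset.sum_add_distrib, Finset.sum_div]
      refine Finset.sum_lt_sum (fun j _ => hterm_le j) ⟨j0, Finset.mem_univ _, ?_⟩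
      rw [hmmj j0, hssj j0]
      exact term_mid_lt (hω j0) (hy2 j0) (hxh2 j0) hj0
    linarith
  · have hd0 : ((1/2:ℝ) • (y.1 - xh.1)) ≠ 0 :=
      smul_ne_zero (by norm_num) (sub_ne_zero.2 h1)
    have hQDpos : 0 < ((1/2:ℝ) • (y.1 - xh.1)) ⬝ᵥ Ω *ᵥ ((1/2:ℝ) • (y.1 - xh.1)) := by
      have h2 := hΩ.dotProduct_mulVec_pos hd0
      simpa using h2
    linarith
end

section
/- Let p be a positive integer, a, s ∈ ℝᵖ vectors with strictly positive entries, and Ω a symmetric positive definite real p×p matrix with diagonal vector ω. Define Λ = (I_p + D_{s}²(D_a + D_a D_{s}² + D_ω))⁻¹ D_a D_{s}². Then, with the partial (Loewner) order on symmetric matrices, I_p + D_a^{−1/2} Ω D_a^{−1/2} − D_s Λ D_s ≻ D_a^{−1/2} Ω D_a^{−1/2} ≻ 0; in particular I_p + D_a^{−1/2} Ω D_a^{−1/2} − D_s Λ D_s is positive definite and hence invertible. -/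
open Matrix

lemma posDef_conj_diag {p : ℕ} (Ω : Matrix (Fin p) (Fin p) ℝ) (hΩ : Ω.PosDef)
    (d : Fin p → ℝ) (hd : ∀ j, d j ≠ 0) :
    (Matrix.diagonal d * Ω * Matrix.diagonal d).PosDef := by
  rw [Matrix.posDef_iff_dotProduct_mulVec]
  constructor
  · have h1 : (Matrix.diagonal d).IsHermitian := by
      simp [Matrix.IsHermitian, Matrix.diagonal_conjTranspose]
    calc (Matrix.diagonal d * Ω * Matrix.diagonal d)ᴴ
        = (Matrix.diagonal d)ᴴ * Ωᴴ * (Matrix.diagonal d)ᴴ := by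
          simp [Matrix.conjTranspose_mul, mul_assoc]
      _ = Matrix.diagonal d * Ω * Matrix.diagonal d := by rw [h1, hΩ.isHermitian]
  · intro x hx
    have hdx : (Matrix.diagonal d) *ᵥ x ≠ 0 := by
      intro h
      apply hx
      funext j
      have := congrFun h j
      simp [Matrix.mulVec_diagonal] at this
      rcases this with h' | h'
      · exact absurd h' (hd j)
      · exact h'
    have key : star x ⬝ᵥ (Matrix.diagonal d * Ω * Matrix.diagonal d) *ᵥ x
        = star ((Matrix.diagonal d) *ᵥ x) ⬝ᵥ Ω *ᵥ ((Matrix.diagonal d) *ᵥ x) := by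
      rw [← Matrix.mulVec_mulVec, ← Matrix.mulVec_mulVec]
      rw [Matrix.dotProduct_mulVec (star x), star_mulVec]
      congr 1
      rw [Matrix.diagonal_conjTranspose]
      simp [Matrix.vecMul_diagonal]
    rw [key]
    exact hΩ.dotProduct_mulVec_pos hdx

/-- with `a, s` strictly positive, `Ω` symmetric positive
definite with diagonal `ω`, and
`Λ = (I + D_s²(D_a + D_a D_s² + D_ω))⁻¹ D_a D_s²`, one has, in the Loewner
order, `I + D_a^{−1/2} Ω D_a^{−1/2} − D_s Λ D_s ≻ D_a^{−1/2} Ω D_a^{−1/2} ≻ 0`;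
in particular the left-hand matrix is positive definite and invertible. -/
theorem C_matrix_well_defined
    (p : ℕ) (hp : 0 < p) (a s : Fin p → ℝ)
    (ha : ∀ j, 0 < a j) (hs : ∀ j, 0 < s j)
    (Ω : Matrix (Fin p) (Fin p) ℝ) (hΩ : Ω.PosDef)
    (ω : Fin p → ℝ) (hω : ∀ j, ω j = Ω j j)
    (Λ : Matrix (Fin p) (Fin p) ℝ)
    (hΛ : Λ = (1 + Matrix.diagonal (fun j => s j ^ 2) *
          (Matrix.diagonal a + Matrix.diagonal a * Matrix.diagonal (fun j => s j ^ 2) +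
            Matrix.diagonal ω))⁻¹ *
        (Matrix.diagonal a * Matrix.diagonal (fun j => s j ^ 2)))
    (Dainvsqrt : Matrix (Fin p) (Fin p) ℝ)
    (hD : Dainvsqrt = Matrix.diagonal fun j => (Real.sqrt (a j))⁻¹) :
    ((1 + Dainvsqrt * Ω * Dainvsqrt - Matrix.diagonal s * Λ * Matrix.diagonal s) -
        Dainvsqrt * Ω * Dainvsqrt).PosDef ∧
    (Dainvsqrt * Ω * Dainvsqrt).PosDef ∧
    (1 + Dainvsqrt * Ω * Dainvsqrt - Matrix.diagonal s * Λ * Matrix.diagonal s).PosDef ∧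
    IsUnit (1 + Dainvsqrt * Ω * Dainvsqrt - Matrix.diagonal s * Λ * Matrix.diagonal s).det := by
  -- positivity of ω
  have hωpos : ∀ j, 0 < ω j := by
    intro j
    rw [hω j]
    have hne : (Pi.single j 1 : Fin p → ℝ) ≠ 0 := by
      intro h; have := congrFun h j; simp at this
    have := hΩ.dotProduct_mulVec_pos hne
    simpa [Matrix.mulVec_single, dotProduct, Pi.single_apply, Finset.sum_ite_eq] using this
  -- the denominator function
  set d : Fin p → ℝ := fun j => 1 + s j ^ 2 * (a j + a j * s j ^ 2 + ω j) with hd_def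
  have hdpos : ∀ j, 0 < d j := by
    intro j
    have := ha j; have := hs j; have := hωpos j
    simp only [hd_def]
    positivity
  -- identify the big matrix as diagonal d
  have hbig : (1 + Matrix.diagonal (fun j => s j ^ 2) *
      (Matrix.diagonal a + Matrix.diagonal a * Matrix.diagonal (fun j => s j ^ 2) +
        Matrix.diagonal ω)) = Matrix.diagonal d := by
    simp only [Matrix.diagonal_mul_diagonal, Matrix.diagonal_add, ← Matrix.diagonal_one,
      mul_add, Matrix.mul_add]
    exact congrArg Matrix.diagonal (funext fun j => by simp only [hd_def]; ring)
  -- inverse of diagonal d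
  have hinv : (Matrix.diagonal d)⁻¹ = Matrix.diagonal (fun j => (d j)⁻¹) := by
    apply Matrix.inv_eq_right_inv
    rw [Matrix.diagonal_mul_diagonal, ← Matrix.diagonal_one]
    exact congrArg Matrix.diagonal (funext fun j => mul_inv_cancel₀ (hdpos j).ne')
  -- Λ is diagonal
  have hΛd : Λ = Matrix.diagonal (fun j => (d j)⁻¹ * (a j * s j ^ 2)) := by
    rw [hΛ, hbig, hinv, Matrix.diagonal_mul_diagonal, Matrix.diagonal_mul_diagonal]
  -- D_s Λ D_s is diagonal
  have hSΛS : Matrix.diagonal s * Λ * Matrix.diagonal s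
      = Matrix.diagonal (fun j => s j * ((d j)⁻¹ * (a j * s j ^ 2)) * s j) := by
    rw [hΛd, Matrix.diagonal_mul_diagonal, Matrix.diagonal_mul_diagonal]
  -- 1 - D_s Λ D_s is diagonal with positive entries
  have hkey : (1 : Matrix (Fin p) (Fin p) ℝ) - Matrix.diagonal s * Λ * Matrix.diagonal s
      = Matrix.diagonal (fun j => 1 - s j * ((d j)⁻¹ * (a j * s j ^ 2)) * s j) := by
    rw [hSΛS, ← Matrix.diagonal_one, Matrix.diagonal_sub]
  have hentry : ∀ j, 0 < 1 - s j * ((d j)⁻¹ * (a j * s j ^ 2)) * s j := by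
    intro j
    have hdj := hdpos j
    rw [sub_pos]
    rw [show s j * ((d j)⁻¹ * (a j * s j ^ 2)) * s j = (a j * s j ^ 2 * s j ^ 2) / d j by
      field_simp]
    rw [div_lt_one hdj]
    have := hωpos j; have := ha j
    have hsq : 0 < s j ^ 2 := pow_pos (hs j) 2
    have hdj' : d j = 1 + s j ^ 2 * (a j + a j * s j ^ 2 + ω j) := by simp [hd_def]
    nlinarith
  have hdiagPD : ((1 : Matrix (Fin p) (Fin p) ℝ)
      - Matrix.diagonal s * Λ * Matrix.diagonal s).PosDef := by
    rw [hkey]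
    exact Matrix.posDef_diagonal_iff.mpr hentry
  -- conjugated Ω
  have hX : (Dainvsqrt * Ω * Dainvsqrt).PosDef := by
    rw [hD]
    apply posDef_conj_diag Ω hΩ
    intro j
    exact inv_ne_zero (Real.sqrt_ne_zero'.mpr (ha j))
  have heq1 : (1 + Dainvsqrt * Ω * Dainvsqrt - Matrix.diagonal s * Λ * Matrix.diagonal s)
      - Dainvsqrt * Ω * Dainvsqrt
      = (1 : Matrix (Fin p) (Fin p) ℝ) - Matrix.diagonal s * Λ * Matrix.diagonal s := by
    abel
  have heq2 : 1 + Dainvsqrt * Ω * Dainvsqrt - Matrix.diagonal s * Λ * Matrix.diagonal s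
      = ((1 : Matrix (Fin p) (Fin p) ℝ) - Matrix.diagonal s * Λ * Matrix.diagonal s)
        + Dainvsqrt * Ω * Dainvsqrt := by
    abel
  have hC : (1 + Dainvsqrt * Ω * Dainvsqrt
      - Matrix.diagonal s * Λ * Matrix.diagonal s).PosDef := by
    rw [heq2]; exact hdiagPD.add hX
  refine ⟨?_, hX, hC, ?_⟩
  · rw [heq1]; exact hdiagPD
  · exact isUnit_iff_ne_zero.mpr hC.det_pos.ne'
end

section
/- Let p be a positive integer, a, s ∈ ℝᵖ with strictly positive entries, Ω a symmetric positive definite real p×p matrix with diagonal vector ω. Define Λ = (I_p + D_{s}²(D_a + D_a D_{s}² + D_ω))⁻¹ D_a D_{s}² and C = (I_p + D_a^{−1/2} Ω D_a^{−1/2} − D_s Λ D_s)⁻¹. Let M be the 2p×2p block matrix M = [[D_a + Ω, D_a D_s], [D_a D_s, D_a(I_p + D_s²) + D_s^{−2} + D_ω]] and let P be the 2p×2p block matrix P = [[D_a^{−1/2}, 0], [0, D_a^{−1/2}]] · [[C, −C D_s Λ], [−Λ D_s C, Λ + Λ D_s C D_s Λ]] · [[D_a^{−1/2}, 0], [0,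 D_a^{−1/2}]]. Then M · P = I_{2p}; that is, P = M⁻¹. -/
open Matrix

/-- Proposition A.1: the block matrix
`M = [[D_a + Ω, D_a D_s], [D_a D_s, D_a(I + D_s²) + D_s^{−2} + D_ω]]`
has inverse
`P = blockdiag(D_a^{−1/2}, D_a^{−1/2}) · [[C, −C D_s Λ], [−Λ D_s C, Λ + Λ D_s C D_s Λ]]
     · blockdiag(D_a^{−1/2}, D_a^{−1/2})`,
i.e. `M · P = I_{2p}`. -/
theorem hessian_block_inverse
    (p : ℕ) (hp : 0 < p) (a s : Fin p → ℝ)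
    (ha : ∀ j, 0 < a j) (hs : ∀ j, 0 < s j)
    (Ω : Matrix (Fin p) (Fin p) ℝ) (hΩ : Ω.PosDef)
    (ω : Fin p → ℝ) (hω : ∀ j, ω j = Ω j j)
    (Λ : Matrix (Fin p) (Fin p) ℝ)
    (hΛ : Λ = (1 + Matrix.diagonal (fun j => s j ^ 2) *
          (Matrix.diagonal a + Matrix.diagonal a * Matrix.diagonal (fun j => s j ^ 2) +
            Matrix.diagonal ω))⁻¹ *
        (Matrix.diagonal a * Matrix.diagonal (fun j => s j ^ 2)))
    (C : Matrix (Fin p) (Fin p) ℝ)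
    (hC : C = (1 + Matrix.diagonal (fun j => (Real.sqrt (a j))⁻¹) * Ω *
          Matrix.diagonal (fun j => (Real.sqrt (a j))⁻¹) -
          Matrix.diagonal s * Λ * Matrix.diagonal s)⁻¹)
    (M : Matrix (Fin p ⊕ Fin p) (Fin p ⊕ Fin p) ℝ)
    (hM : M = Matrix.fromBlocks
        (Matrix.diagonal a + Ω) (Matrix.diagonal a * Matrix.diagonal s)
        (Matrix.diagonal a * Matrix.diagonal s)
        (Matrix.diagonal a * (1 + Matrix.diagonal (fun j => s j ^ 2)) +
          Matrix.diagonal (fun j => (s j ^ 2)⁻¹) + Matrix.diagonal ω))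
    (P : Matrix (Fin p ⊕ Fin p) (Fin p ⊕ Fin p) ℝ)
    (hP : P = Matrix.fromBlocks
          (Matrix.diagonal (fun j => (Real.sqrt (a j))⁻¹)) 0 0
          (Matrix.diagonal (fun j => (Real.sqrt (a j))⁻¹)) *
        Matrix.fromBlocks C (-(C * Matrix.diagonal s * Λ))
          (-(Λ * Matrix.diagonal s * C))
          (Λ + Λ * Matrix.diagonal s * C * Matrix.diagonal s * Λ) *
        Matrix.fromBlocks
          (Matrix.diagonal (fun j => (Real.sqrt (a j))⁻¹)) 0 0
          (Matrix.diagonal (fun j => (Real.sqrt (a j))⁻¹))) :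
    M * P = 1 := by
  -- basic positivity
  have hωpos : ∀ j, 0 < ω j := by
    intro j
    rw [hω j]
    exact hΩ.diag_pos
  have ha0 : ∀ j, a j ≠ 0 := fun j => (ha j).ne'
  have hs0 : ∀ j, s j ≠ 0 := fun j => (hs j).ne'
  have hra : ∀ j, Real.sqrt (a j) > 0 := fun j => Real.sqrt_pos.2 (ha j)
  have hra0 : ∀ j, Real.sqrt (a j) ≠ 0 := fun j => (hra j).ne'
  have hrr : ∀ j, Real.sqrt (a j) * Real.sqrt (a j) = a j :=
    fun j => Real.mul_self_sqrt (ha j).le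
  -- names
  have hdiag_ext : ∀ (f g : Fin p → ℝ), (∀ j, f j = g j) →
      Matrix.diagonal f = Matrix.diagonal g :=
    fun f g hfg => congrArg Matrix.diagonal (funext hfg)
  set Ai : Matrix (Fin p) (Fin p) ℝ := Matrix.diagonal (fun j => (Real.sqrt (a j))⁻¹) with hAi
  set S : Matrix (Fin p) (Fin p) ℝ := Matrix.diagonal s with hS
  set k : Fin p → ℝ := fun j => 1 + s j ^ 2 * (a j + a j * s j ^ 2 + ω j) with hkdef
  have hk : ∀ j, 0 < k j := by
    intro j
    have := ha j; have := hs j; have := hωpos j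
    simp only [hkdef]
    nlinarith [sq_nonneg (s j), sq_nonneg (s j ^ 2)]
  have hk0 : ∀ j, k j ≠ 0 := fun j => (hk j).ne'
  set l : Fin p → ℝ := fun j => (k j)⁻¹ * (a j * s j ^ 2) with hldef
  -- Λ is diagonal
  have hΛd : Λ = Matrix.diagonal l := by
    rw [hΛ]
    rw [show (1 : Matrix (Fin p) (Fin p) ℝ) +
        Matrix.diagonal (fun j => s j ^ 2) *
          (Matrix.diagonal a + Matrix.diagonal a * Matrix.diagonal (fun j => s j ^ 2) +
            Matrix.diagonal ω) = Matrix.diagonal k by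
      simp only [← Matrix.diagonal_one, Matrix.diagonal_mul_diagonal, Matrix.diagonal_add]; rfl]
    rw [show (Matrix.diagonal k)⁻¹ = Matrix.diagonal (fun j => (k j)⁻¹) from
        Matrix.inv_eq_right_inv (by
          rw [Matrix.diagonal_mul_diagonal, ← Matrix.diagonal_one]
          exact hdiag_ext _ _ fun j => mul_inv_cancel₀ (hk0 j)),
      Matrix.diagonal_mul_diagonal, Matrix.diagonal_mul_diagonal]
  -- H with H * Λ = 1
  set h : Fin p → ℝ := fun j => 1 + s j ^ 2 + (a j * s j ^ 2)⁻¹ + ω j * (a j)⁻¹ with hhdef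
  set H : Matrix (Fin p) (Fin p) ℝ := Matrix.diagonal h with hH
  have hHΛ : H * Λ = 1 := by
    rw [hΛd, hH, Matrix.diagonal_mul_diagonal, ← Matrix.diagonal_one]
    refine hdiag_ext _ _ fun j => ?_
    show h j * l j = 1
    have hk' : h j * (a j * s j ^ 2) = k j := by
      have h1 := ha0 j
      have h2 := hs0 j
      simp only [hhdef, hkdef]
      field_simp
      ring
    calc h j * l j = h j * (a j * s j ^ 2) * (k j)⁻¹ := by simp only [hldef]; ring
      _ = k j * (k j)⁻¹ := by rw [hk']
      _ = 1 := mul_inv_cancel₀ (hk0 j)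
  -- E and C
  set G : Matrix (Fin p) (Fin p) ℝ := 1 + Ai * Ω * Ai with hG
  set E : Matrix (Fin p) (Fin p) ℝ := G - S * Λ * S with hE
  have hCE : C = E⁻¹ := by rw [hC, hE, hG]
  have hEpd : E.PosDef := by
    have hEeq : E = Ai * Ω * Ai + Matrix.diagonal (fun j => 1 - s j * l j * s j) := by
      rw [hE, hG, hΛd, hS, Matrix.diagonal_mul_diagonal, Matrix.diagonal_mul_diagonal]
      rw [show Matrix.diagonal (fun j => (1 : ℝ) - s j * l j * s j) =
          1 - Matrix.diagonal (fun j => s j * l j * s j) by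
        rw [← Matrix.diagonal_one, Matrix.diagonal_sub]]
      abel
    rw [hEeq]
    have h1 : (Ai * Ω * Ai).PosSemidef := by
      have := hΩ.posSemidef.conjTranspose_mul_mul_same Ai
      have hAc : Aiᴴ = Ai := by
        simp [hAi, Matrix.diagonal_conjTranspose]
      rwa [hAc] at this
    have h2 : (Matrix.diagonal (fun j => 1 - s j * l j * s j)).PosDef := by
      rw [Matrix.posDef_diagonal_iff]
      intro j
      have key : s j * l j * s j = a j * s j ^ 4 * (k j)⁻¹ := by
        simp only [hldef]; ring
      rw [key, sub_pos]
      have hlt : a j * s j ^ 4 < k j := by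
        simp only [hkdef]
        have := ha j; have := hs j; have := hωpos j
        nlinarith [sq_nonneg (s j), sq_nonneg (s j ^ 2)]
      calc a j * s j ^ 4 * (k j)⁻¹ < k j * (k j)⁻¹ := by
            exact mul_lt_mul_of_pos_right hlt (inv_pos.2 (hk j))
        _ = 1 := mul_inv_cancel₀ (hk0 _)
    exact Matrix.PosDef.posSemidef_add h1 h2
  have hdet : IsUnit E.det := isUnit_iff_ne_zero.2 hEpd.det_pos.ne'
  have hEC : E * C = 1 := by rw [hCE]; exact Matrix.mul_nonsing_inv E hdet
  have hECX : ∀ X : Matrix (Fin p) (Fin p) ℝ, E * (C * X) = X := by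
    intro X; rw [← Matrix.mul_assoc, hEC, Matrix.one_mul]
  have hHΛX : ∀ X : Matrix (Fin p) (Fin p) ℝ, H * (Λ * X) = X := by
    intro X; rw [← Matrix.mul_assoc, hHΛ, Matrix.one_mul]
  -- block factorization of M
  set r : Fin p → ℝ := fun j => Real.sqrt (a j) with hrdef
  set Q : Matrix (Fin p ⊕ Fin p) (Fin p ⊕ Fin p) ℝ :=
    Matrix.fromBlocks (Matrix.diagonal r) 0 0 (Matrix.diagonal r) with hQ
  set Q' : Matrix (Fin p ⊕ Fin p) (Fin p ⊕ Fin p) ℝ :=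
    Matrix.fromBlocks Ai 0 0 Ai with hQ'
  set N : Matrix (Fin p ⊕ Fin p) (Fin p ⊕ Fin p) ℝ :=
    Matrix.fromBlocks C (-(C * S * Λ)) (-(Λ * S * C)) (Λ + Λ * S * C * S * Λ) with hN
  set M' : Matrix (Fin p ⊕ Fin p) (Fin p ⊕ Fin p) ℝ :=
    Matrix.fromBlocks G S S H with hM'
  have hQQ' : Q * Q' = 1 := by
    rw [hQ, hQ', hAi, Matrix.fromBlocks_multiply]
    simp only [Matrix.mul_zero, Matrix.zero_mul, add_zero, zero_add,
      Matrix.diagonal_mul_diagonal]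
    rw [← Matrix.fromBlocks_one]
    refine Matrix.fromBlocks_inj.mpr ⟨?_, rfl, rfl, ?_⟩ <;>
    · rw [← Matrix.diagonal_one]
      exact hdiag_ext _ _ fun j => mul_inv_cancel₀ (hra0 j)
  have hMQ : M = Q * M' * Q := by
    rw [hM, hQ, hM', Matrix.fromBlocks_multiply, Matrix.fromBlocks_multiply]
    simp only [Matrix.mul_zero, Matrix.zero_mul, add_zero, zero_add]
    refine Matrix.fromBlocks_inj.mpr ⟨?_, ?_, ?_, ?_⟩
    · -- top-left : diag a + Ω = Dr * G * Dr
      rw [hG, hAi]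
      have h1 : Matrix.diagonal r * (1 + Matrix.diagonal (fun j => (Real.sqrt (a j))⁻¹) * Ω *
          Matrix.diagonal (fun j => (Real.sqrt (a j))⁻¹)) * Matrix.diagonal r =
          Matrix.diagonal r * Matrix.diagonal r +
          (Matrix.diagonal r * Matrix.diagonal (fun j => (Real.sqrt (a j))⁻¹)) * Ω *
          (Matrix.diagonal (fun j => (Real.sqrt (a j))⁻¹) * Matrix.diagonal r) := by
        noncomm_ring
      rw [h1]
      have h2 : Matrix.diagonal r * Matrix.diagonal (fun j => (Real.sqrt (a j))⁻¹) =
          (1 : Matrix (Fin p) (Fin p) ℝ) := by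
        rw [Matrix.diagonal_mul_diagonal, ← Matrix.diagonal_one]
        exact hdiag_ext _ _ fun j => mul_inv_cancel₀ (hra0 j)
      have h3 : Matrix.diagonal (fun j => (Real.sqrt (a j))⁻¹) * Matrix.diagonal r =
          (1 : Matrix (Fin p) (Fin p) ℝ) := by
        rw [Matrix.diagonal_mul_diagonal, ← Matrix.diagonal_one]
        exact hdiag_ext _ _ fun j => inv_mul_cancel₀ (hra0 j)
      rw [h2, h3, Matrix.one_mul, Matrix.mul_one, Matrix.diagonal_mul_diagonal,
        hdiag_ext (fun i => r i * r i) a fun j => hrr j]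
    · rw [hS, Matrix.diagonal_mul_diagonal, Matrix.diagonal_mul_diagonal,
        Matrix.diagonal_mul_diagonal]
      refine hdiag_ext _ _ fun j => ?_
      rw [show r j * s j * r j = (r j * r j) * s j by ring, hrr j]
    · rw [hS, Matrix.diagonal_mul_diagonal, Matrix.diagonal_mul_diagonal,
        Matrix.diagonal_mul_diagonal]
      refine hdiag_ext _ _ fun j => ?_
      rw [show r j * s j * r j = (r j * r j) * s j by ring, hrr j]
    · rw [hH]
      simp only [← Matrix.diagonal_one, Matrix.mul_add, Matrix.diagonal_mul_diagonal,
        Matrix.diagonal_add]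
      refine hdiag_ext _ _ fun j => ?_
      try simp only [Pi.add_apply, Pi.mul_apply, Pi.one_apply]
      rw [show r j * h j * r j = (r j * r j) * h j by ring, hrr j]
      have h1 := ha0 j
      have h2 := hs0 j
      simp only [hhdef]
      field_simp
  have hMN : M' * N = 1 := by
    rw [hM', hN, Matrix.fromBlocks_multiply, ← Matrix.fromBlocks_one]
    have hGe : G = E + S * Λ * S := by rw [hE]; abel
    refine Matrix.fromBlocks_inj.mpr ⟨?_, ?_, ?_, ?_⟩
    · rw [hGe, Matrix.add_mul, hEC]
      simp only [Matrix.mul_neg, Matrix.mul_assoc]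
      abel
    · rw [hGe]
      simp only [Matrix.add_mul, Matrix.mul_neg, Matrix.mul_add, Matrix.mul_assoc, hECX]
      abel
    · simp only [Matrix.mul_neg, Matrix.mul_assoc, hHΛX]
      abel
    · have : H * (Λ + Λ * S * C * S * Λ) = H * Λ + H * (Λ * (S * (C * (S * Λ)))) := by
        simp only [Matrix.mul_add, Matrix.mul_assoc]
      rw [this, hHΛ, hHΛX]
      simp only [Matrix.mul_neg, Matrix.mul_assoc]
      abel
  calc M * P = Q * M' * Q * (Q' * N * Q') := by rw [hMQ, hP]
      _ = Q * (M' * ((Q * Q') * (N * Q'))) := by simp only [Matrix.mul_assoc]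
      _ = Q * (M' * (N * Q')) := by rw [hQQ', Matrix.one_mul]
      _ = Q * (M' * N * Q') := by
        rw [show M' * (N * Q') = M' * N * Q' from (Matrix.mul_assoc _ _ _).symm]
      _ = Q * Q' := by rw [hMN, Matrix.one_mul]
      _ = 1 := hQQ'
end

section
/- Let p, m be positive integers, a, s ∈ ℝᵖ with strictly positive entries, Ω a symmetric positive definite real p×p matrix with diagonal vector ω, and x ∈ ℝᵐ (viewed as an m×1 column matrix). Define Λ = (I_p + D_{s}²(D_a + D_a D_{s}² + D_ω))⁻¹ D_a D_{s}², G = D_s Λ D_s, C = (I_p + D_a^{−1/2} Ω D_a^{−1/2} − G)⁻¹, and E = G + (I_p − G) C (I_p − G). Let N = [D_a ⊗ x, D_{a⊙s} ⊗ x] be the mp×2p matrix formed by horizontally concatenating the Kronecker products D_a ⊗ x and D_{a⊙s} ⊗ x (where a⊙s is the entrywise product), and let P = [[C, −C D_s Λ], [−Λ D_s C, Λ + Λ D_s C D_s Λ]] conjugated on both sides by the block-diagonal matrix with blocks D_a^{−1/2}, D_a^{−1/2} (as in Proposition A.1). Then N · P · Nᵀ = (D_a^{1/2} E D_a^{1/2})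 ⊗ (x xᵀ). -/
open Matrix Kronecker

/-- Key structural lemma: conjugating a `p×p` matrix `Q` by Kronecker-with-column
matrices gives a Kronecker product with `vecMulVec x x`. -/
lemma kron_col_conj {p m : ℕ} (M Q M' : Matrix (Fin p) (Fin p) ℝ) (x : Fin m → ℝ) :
    (Matrix.reindex (Equiv.refl (Fin p × Fin m)) (Equiv.prodUnique (Fin p) (Fin 1))
        (M ⊗ₖ Matrix.replicateCol (Fin 1) x)) * Q *
      (Matrix.reindex (Equiv.refl (Fin p × Fin m)) (Equiv.prodUnique (Fin p) (Fin 1))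
        (M' ⊗ₖ Matrix.replicateCol (Fin 1) x))ᵀ =
    (M * Q * M'ᵀ) ⊗ₖ Matrix.vecMulVec x x := by
  ext ⟨i, k⟩ ⟨j, l⟩
  simp only [Matrix.mul_apply, Matrix.reindex_apply, Matrix.submatrix_apply,
    Matrix.transpose_apply, Matrix.kroneckerMap_apply, Matrix.vecMulVec_apply,
    Equiv.refl_symm, Equiv.refl_apply, Matrix.replicateCol_apply, Equiv.prodUnique_symm_apply,
    Finset.sum_mul]
  refine Finset.sum_congr rfl fun j' _ => Finset.sum_congr rfl fun j'' _ => by ring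

lemma neg_kron {l n : Type*} (A : Matrix l l ℝ) (B : Matrix n n ℝ) :
    (-A) ⊗ₖ B = -(A ⊗ₖ B) := by
  ext ⟨i, k⟩ ⟨j, l⟩
  simp [Matrix.kroneckerMap_apply]

/-- Proposition A.3: with
`N = [D_a ⊗ x, D_{a⊙s} ⊗ x]` (x viewed as an `m×1` column) and `P` the block
matrix `[[C, −C D_s Λ], [−Λ D_s C, Λ + Λ D_s C D_s Λ]]` conjugated by
`blockdiag(D_a^{−1/2}, D_a^{−1/2})`, one has
`N · P · Nᵀ = (D_a^{1/2} E D_a^{1/2}) ⊗ (x xᵀ)`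
where `E = G + (I − G) C (I − G)` and `G = D_s Λ D_s`. -/
theorem schur_correction_kronecker
    (p m : ℕ) (hp : 0 < p) (hm : 0 < m)
    (a s : Fin p → ℝ) (ha : ∀ j, 0 < a j) (hs : ∀ j, 0 < s j)
    (Ω : Matrix (Fin p) (Fin p) ℝ) (hΩ : Ω.PosDef)
    (ω : Fin p → ℝ) (hω : ∀ j, ω j = Ω j j)
    (x : Fin m → ℝ)
    (Λ : Matrix (Fin p) (Fin p) ℝ)
    (hΛ : Λ = (1 + Matrix.diagonal (fun j => s j ^ 2) *
          (Matrix.diagonal a + Matrix.diagonal a * Matrix.diagonal (fun j => s j ^ 2) +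
            Matrix.diagonal ω))⁻¹ *
        (Matrix.diagonal a * Matrix.diagonal (fun j => s j ^ 2)))
    (G : Matrix (Fin p) (Fin p) ℝ)
    (hG : G = Matrix.diagonal s * Λ * Matrix.diagonal s)
    (C : Matrix (Fin p) (Fin p) ℝ)
    (hC : C = (1 + Matrix.diagonal (fun j => (Real.sqrt (a j))⁻¹) * Ω *
          Matrix.diagonal (fun j => (Real.sqrt (a j))⁻¹) - G)⁻¹)
    (E : Matrix (Fin p) (Fin p) ℝ)
    (hE : E = G + (1 - G) * C * (1 - G))
    (N : Matrix (Fin p × Fin m) (Fin p ⊕ Fin p) ℝ)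
    (hN : N = Matrix.fromCols
        (Matrix.reindex (Equiv.refl (Fin p × Fin m)) (Equiv.prodUnique (Fin p) (Fin 1))
          (Matrix.diagonal a ⊗ₖ Matrix.replicateCol (Fin 1) x))
        (Matrix.reindex (Equiv.refl (Fin p × Fin m)) (Equiv.prodUnique (Fin p) (Fin 1))
          (Matrix.diagonal (fun j => a j * s j) ⊗ₖ Matrix.replicateCol (Fin 1) x)))
    (P : Matrix (Fin p ⊕ Fin p) (Fin p ⊕ Fin p) ℝ)
    (hP : P = Matrix.fromBlocks
          (Matrix.diagonal (fun j => (Real.sqrt (a j))⁻¹)) 0 0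
          (Matrix.diagonal (fun j => (Real.sqrt (a j))⁻¹)) *
        Matrix.fromBlocks C (-(C * Matrix.diagonal s * Λ))
          (-(Λ * Matrix.diagonal s * C))
          (Λ + Λ * Matrix.diagonal s * C * Matrix.diagonal s * Λ) *
        Matrix.fromBlocks
          (Matrix.diagonal (fun j => (Real.sqrt (a j))⁻¹)) 0 0
          (Matrix.diagonal (fun j => (Real.sqrt (a j))⁻¹))) :
    N * P * Nᵀ =
      (Matrix.diagonal (fun j => Real.sqrt (a j)) * E *
          Matrix.diagonal (fun j => Real.sqrt (a j))) ⊗ₖ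
        Matrix.vecMulVec x x := by
  set Ai : Matrix (Fin p) (Fin p) ℝ := Matrix.diagonal (fun j => (Real.sqrt (a j))⁻¹) with hAi
  set R : Matrix (Fin p) (Fin p) ℝ := Matrix.diagonal (fun j => Real.sqrt (a j)) with hR
  set S : Matrix (Fin p) (Fin p) ℝ := Matrix.diagonal s with hS
  have hane : ∀ j, Real.sqrt (a j) ≠ 0 := fun j =>
    ne_of_gt (Real.sqrt_pos.mpr (ha j))
  have hsq : ∀ j, Real.sqrt (a j) * Real.sqrt (a j) = a j := fun j =>
    Real.mul_self_sqrt (le_of_lt (ha j))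
  have hDa : Matrix.diagonal a = R * R := by
    rw [hR, Matrix.diagonal_mul_diagonal]
    exact congrArg _ (funext fun j => (hsq j).symm)
  have hDas : Matrix.diagonal (fun j => a j * s j) = R * (S * R) := by
    rw [hR, hS, Matrix.diagonal_mul_diagonal, Matrix.diagonal_mul_diagonal]
    refine congrArg _ (funext fun j => ?_)
    rw [mul_comm (s j) (Real.sqrt (a j)), ← mul_assoc, hsq]
  have hAiR : ∀ X : Matrix (Fin p) (Fin p) ℝ, Ai * (R * X) = X := by
    intro X
    rw [← Matrix.mul_assoc, hAi, hR, Matrix.diagonal_mul_diagonal]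
    rw [show (fun j => (Real.sqrt (a j))⁻¹ * Real.sqrt (a j)) = fun _ => (1 : ℝ) from
      funext fun j => inv_mul_cancel₀ (hane j)]
    rw [Matrix.diagonal_one, Matrix.one_mul]
  have hRAi : ∀ X : Matrix (Fin p) (Fin p) ℝ, R * (Ai * X) = X := by
    intro X
    rw [← Matrix.mul_assoc, hAi, hR, Matrix.diagonal_mul_diagonal]
    rw [show (fun j => Real.sqrt (a j) * (Real.sqrt (a j))⁻¹) = fun _ => (1 : ℝ) from
      funext fun j => mul_inv_cancel₀ (hane j)]
    rw [Matrix.diagonal_one, Matrix.one_mul]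
  have hAiR1 : Ai * R = 1 := by
    have := hAiR 1; rwa [Matrix.mul_one] at this
  have hRAi1 : R * Ai = 1 := by
    have := hRAi 1; rwa [Matrix.mul_one] at this
  -- multiply out the block matrix P and distribute
  rw [hP, hN, Matrix.transpose_fromCols, Matrix.fromBlocks_multiply,
    Matrix.fromBlocks_multiply, Matrix.fromCols_mul_fromBlocks,
    Matrix.fromCols_mul_fromRows]
  simp only [Matrix.mul_zero, Matrix.zero_mul, zero_add, add_zero, neg_zero,
    Matrix.mul_neg, Matrix.neg_mul, neg_neg, Matrix.add_mul]
  simp only [show ∀ Q M', (Matrix.reindex (Equiv.refl (Fin p × Fin m))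
        (Equiv.prodUnique (Fin p) (Fin 1)) (Matrix.diagonal a ⊗ₖ Matrix.replicateCol (Fin 1) x)) * Q *
      (Matrix.reindex (Equiv.refl (Fin p × Fin m)) (Equiv.prodUnique (Fin p) (Fin 1))
        (M' ⊗ₖ Matrix.replicateCol (Fin 1) x))ᵀ =
      (Matrix.diagonal a * Q * M'ᵀ) ⊗ₖ Matrix.vecMulVec x x from
      fun Q M' => kron_col_conj _ Q M' x,
    show ∀ Q M', (Matrix.reindex (Equiv.refl (Fin p × Fin m))
        (Equiv.prodUnique (Fin p) (Fin 1))
        (Matrix.diagonal (fun j => a j * s j) ⊗ₖ Matrix.replicateCol (Fin 1) x)) * Q *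
      (Matrix.reindex (Equiv.refl (Fin p × Fin m)) (Equiv.prodUnique (Fin p) (Fin 1))
        (M' ⊗ₖ Matrix.replicateCol (Fin 1) x))ᵀ =
      (Matrix.diagonal (fun j => a j * s j) * Q * M'ᵀ) ⊗ₖ Matrix.vecMulVec x x from
      fun Q M' => kron_col_conj _ Q M' x]
  simp only [← neg_kron, ← Matrix.add_kronecker]
  congr 1
  rw [hE, hG]
  simp only [Matrix.diagonal_transpose]
  rw [hDa, hDas]
  simp only [Matrix.mul_neg, Matrix.neg_mul, Matrix.mul_add, Matrix.add_mul,
    Matrix.mul_assoc]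
  simp only [hAiR, hRAi]
  noncomm_ring
end

section
/- Let p be a positive integer, a, s ∈ ℝᵖ with strictly positive entries, and Ω a symmetric positive definite real p×p matrix with diagonal vector ω. Define Λ = (I_p + D_{s}²(D_a + D_a D_{s}² + D_ω))⁻¹ D_a D_{s}², G = D_s Λ D_s, C = (I_p + D_a^{−1/2} Ω D_a^{−1/2} − G)⁻¹, and E = G + (I_p − G) C (I_p − G). Then the matrix Ω⁻¹ + D_a⁻¹ + D_{s}⁴ (I_p + D_{s}²(D_a + D_ω))⁻¹ is invertible and D_a^{1/2} (I_p − E) D_a^{1/2} = (Ω⁻¹ + D_a⁻¹ + D_{s}⁴ (I_p + D_{s}²(D_a + D_ω))⁻¹)⁻¹. -/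
open Matrix

/-- Proposition A.4: with `a, s` strictly positive, `Ω`
symmetric positive definite with diagonal `ω`,
`Λ = (I + D_s²(D_a + D_a D_s² + D_ω))⁻¹ D_a D_s²`, `G = D_s Λ D_s`,
`C = (I + D_a^{−1/2} Ω D_a^{−1/2} − G)⁻¹`, `E = G + (I − G) C (I − G)`,
the matrix `Ω⁻¹ + D_a⁻¹ + D_s⁴ (I + D_s²(D_a + D_ω))⁻¹` is invertible and
`D_a^{1/2} (I − E) D_a^{1/2} = (Ω⁻¹ + D_a⁻¹ + D_s⁴ (I + D_s²(D_a + D_ω))⁻¹)⁻¹`. -/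
theorem schur_complement_closed_form
    (p : ℕ) (hp : 0 < p) (a s : Fin p → ℝ)
    (ha : ∀ j, 0 < a j) (hs : ∀ j, 0 < s j)
    (Ω : Matrix (Fin p) (Fin p) ℝ) (hΩ : Ω.PosDef)
    (ω : Fin p → ℝ) (hω : ∀ j, ω j = Ω j j)
    (Λ : Matrix (Fin p) (Fin p) ℝ)
    (hΛ : Λ = (1 + Matrix.diagonal (fun j => s j ^ 2) *
          (Matrix.diagonal a + Matrix.diagonal a * Matrix.diagonal (fun j => s j ^ 2) +
            Matrix.diagonal ω))⁻¹ *
        (Matrix.diagonal a * Matrix.diagonal (fun j => s j ^ 2)))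
    (G : Matrix (Fin p) (Fin p) ℝ)
    (hG : G = Matrix.diagonal s * Λ * Matrix.diagonal s)
    (C : Matrix (Fin p) (Fin p) ℝ)
    (hC : C = (1 + Matrix.diagonal (fun j => (Real.sqrt (a j))⁻¹) * Ω *
          Matrix.diagonal (fun j => (Real.sqrt (a j))⁻¹) - G)⁻¹)
    (E : Matrix (Fin p) (Fin p) ℝ)
    (hE : E = G + (1 - G) * C * (1 - G)) :
    IsUnit (Ω⁻¹ + (Matrix.diagonal a)⁻¹ + Matrix.diagonal (fun j => s j ^ 4) *
        (1 + Matrix.diagonal (fun j => s j ^ 2) *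
          (Matrix.diagonal a + Matrix.diagonal ω))⁻¹).det ∧
    Matrix.diagonal (fun j => Real.sqrt (a j)) * (1 - E) *
        Matrix.diagonal (fun j => Real.sqrt (a j)) =
      (Ω⁻¹ + (Matrix.diagonal a)⁻¹ + Matrix.diagonal (fun j => s j ^ 4) *
        (1 + Matrix.diagonal (fun j => s j ^ 2) *
          (Matrix.diagonal a + Matrix.diagonal ω))⁻¹)⁻¹ := by
  classical
  have hsa : ∀ j, 0 < Real.sqrt (a j) := fun j => Real.sqrt_pos.mpr (ha j)
  have hsa2 : ∀ j, Real.sqrt (a j) ^ 2 = a j := fun j => Real.sq_sqrt (ha j).le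
  have hωp : ∀ j, 0 < ω j := by
    intro j
    rw [hω]
    have h0 : (Pi.single j 1 : Fin p → ℝ) ≠ 0 := by
      intro h
      have := congrFun h j
      simp at this
    have := hΩ.diag_pos (i := j)
    simpa using this
  -- handy inversion lemma for diagonal matrices
  have dinv : ∀ (v : Fin p → ℝ), (∀ j, v j ≠ 0) → (Matrix.diagonal v)⁻¹ =
      Matrix.diagonal (fun j => (v j)⁻¹) := by
    intro v hv
    refine Matrix.inv_eq_right_inv ?_
    rw [Matrix.diagonal_mul_diagonal, ← Matrix.diagonal_one]
    exact congrArg Matrix.diagonal (funext fun j => mul_inv_cancel₀ (hv j))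
  -- scalar abbreviations
  set d : Fin p → ℝ := fun j => 1 + s j ^ 2 * (a j + a j * s j ^ 2 + ω j) with hd_def
  set e : Fin p → ℝ := fun j => 1 + s j ^ 2 * (a j + ω j) with he_def
  have hdp : ∀ j, 0 < d j := by
    intro j; have h1 := ha j; have h2 := hs j; have h3 := hωp j
    simp only [hd_def]; positivity
  have hep : ∀ j, 0 < e j := by
    intro j; have h1 := ha j; have h2 := hs j; have h3 := hωp j
    simp only [he_def]; positivity
  have hde : ∀ j, d j = e j + a j * s j ^ 4 := by
    intro j; simp only [hd_def, he_def]; ring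
  set g : Fin p → ℝ := fun j => a j * s j ^ 4 / d j with hg_def
  have h1g : ∀ j, 1 - g j = e j / d j := by
    intro j
    have hd0 := (hdp j).ne'
    rw [hg_def]
    field_simp
    linarith [hde j]
  have h1gp : ∀ j, 0 < 1 - g j := by
    intro j; rw [h1g]; exact div_pos (hep j) (hdp j)
  -- G is diagonal with entries g
  have h1d : (1 : Matrix (Fin p) (Fin p) ℝ) + Matrix.diagonal (fun j => s j ^ 2) *
      (Matrix.diagonal a + Matrix.diagonal a * Matrix.diagonal (fun j => s j ^ 2) +
        Matrix.diagonal ω) = Matrix.diagonal d := by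
    rw [← Matrix.diagonal_one]
    simp only [Matrix.diagonal_mul_diagonal, Matrix.diagonal_add]
    rfl
  have hΛ' : Λ = Matrix.diagonal (fun j => (d j)⁻¹ * (a j * s j ^ 2)) := by
    rw [hΛ, h1d, dinv d (fun j => (hdp j).ne'), Matrix.diagonal_mul_diagonal,
      Matrix.diagonal_mul_diagonal]
  have hG' : G = Matrix.diagonal g := by
    rw [hG, hΛ', Matrix.diagonal_mul_diagonal, Matrix.diagonal_mul_diagonal]
    refine congrArg Matrix.diagonal (funext fun j => ?_)
    have hd0 := (hdp j).ne'
    simp only [hg_def]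
    field_simp
  have h1G : (1 : Matrix (Fin p) (Fin p) ℝ) - G = Matrix.diagonal (fun j => 1 - g j) := by
    rw [hG', ← Matrix.diagonal_one, Matrix.diagonal_sub]
  -- half powers of D_a
  set Dh : Matrix (Fin p) (Fin p) ℝ := Matrix.diagonal (fun j => Real.sqrt (a j)) with hDh_def
  set Di : Matrix (Fin p) (Fin p) ℝ :=
    Matrix.diagonal (fun j => (Real.sqrt (a j))⁻¹) with hDi_def
  have hDhDi : Dh * Di = 1 := by
    rw [hDh_def, hDi_def, Matrix.diagonal_mul_diagonal, ← Matrix.diagonal_one]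
    exact congrArg Matrix.diagonal (funext fun j => mul_inv_cancel₀ (hsa j).ne')
  have hDiDh : Di * Dh = 1 := by
    rw [hDh_def, hDi_def, Matrix.diagonal_mul_diagonal, ← Matrix.diagonal_one]
    exact congrArg Matrix.diagonal (funext fun j => inv_mul_cancel₀ (hsa j).ne')
  -- the matrix K and its basic properties
  set K : Matrix (Fin p) (Fin p) ℝ := 1 + Di * Ω * Di - G with hK_def
  have hC' : C = K⁻¹ := by rw [hC, hK_def, hDi_def]
  have hKsum : K = Matrix.diagonal (fun j => 1 - g j) + Di * Ω * Di := by
    rw [← h1G, hK_def]; abel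
  have hDiH : Diᴴ = Di := by
    rw [hDi_def, Matrix.diagonal_conjTranspose]
    exact congrArg Matrix.diagonal (funext fun j => by simp)
  have hKpd : K.PosDef := by
    rw [hKsum]
    refine (Matrix.PosDef.diagonal h1gp).add_posSemidef ?_
    have := hΩ.posSemidef.mul_mul_conjTranspose_same Di
    rwa [hDiH] at this
  have hKdet : IsUnit K.det := hKpd.det_pos.ne'.isUnit
  have hKC : K * C = 1 := by rw [hC']; exact Matrix.mul_nonsing_inv K hKdet
  have hCK : C * K = 1 := by rw [hC']; exact Matrix.nonsing_inv_mul K hKdet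
  -- key identity for 1 - E
  have hIE : (1 : Matrix (Fin p) (Fin p) ℝ) - E = (1 - G) * C * (Di * Ω * Di) := by
    have hXK : Di * Ω * Di = K - (1 - G) := by rw [hK_def]; abel
    rw [hXK]
    have h2 : (1 - G) * C * (K - (1 - G)) =
        (1 - G) * (C * K) - (1 - G) * C * (1 - G) := by noncomm_ring
    rw [h2, hCK, mul_one, hE]
    abel
  -- the diagonal part of the target matrix
  set m : Fin p → ℝ := fun j => (a j)⁻¹ + s j ^ 4 * (e j)⁻¹ with hm_def
  have hmp : ∀ j, 0 < m j := by
    intro j; have h1 := ha j; have h2 := hs j; have h3 := hep j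
    simp only [hm_def]; positivity
  have h1e : (1 : Matrix (Fin p) (Fin p) ℝ) + Matrix.diagonal (fun j => s j ^ 2) *
      (Matrix.diagonal a + Matrix.diagonal ω) = Matrix.diagonal e := by
    rw [← Matrix.diagonal_one]
    simp only [Matrix.diagonal_mul_diagonal, Matrix.diagonal_add]
    rfl
  have hNdiag : (Matrix.diagonal a)⁻¹ + Matrix.diagonal (fun j => s j ^ 4) *
      (1 + Matrix.diagonal (fun j => s j ^ 2) *
        (Matrix.diagonal a + Matrix.diagonal ω))⁻¹ = Matrix.diagonal m := by
    rw [h1e, dinv a (fun j => (ha j).ne'), dinv e (fun j => (hep j).ne'),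
      Matrix.diagonal_mul_diagonal, Matrix.diagonal_add]
  -- the target matrix, rewritten
  have hNsplit : Ω⁻¹ + (Matrix.diagonal a)⁻¹ + Matrix.diagonal (fun j => s j ^ 4) *
      (1 + Matrix.diagonal (fun j => s j ^ 2) *
        (Matrix.diagonal a + Matrix.diagonal ω))⁻¹ = Ω⁻¹ + Matrix.diagonal m := by
    rw [add_assoc, hNdiag]
  rw [hNsplit]
  -- positive definiteness of the target
  have hNpd : (Ω⁻¹ + Matrix.diagonal m).PosDef :=
    hΩ.inv.add_posSemidef (Matrix.PosDef.diagonal hmp).posSemidef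
  refine ⟨hNpd.det_pos.ne'.isUnit, ?_⟩
  -- the crucial diagonal identity:  m j * √(a j) * (1 - g j) = (√(a j))⁻¹
  have hmD : Matrix.diagonal m * Dh * (1 - G) = Di := by
    rw [h1G, hDh_def, hDi_def, Matrix.diagonal_mul_diagonal, Matrix.diagonal_mul_diagonal]
    refine congrArg Matrix.diagonal (funext fun j => ?_)
    have ha0 := (ha j).ne'
    have he0 := (hep j).ne'
    have hd0 := (hdp j).ne'
    have hsa0 := (hsa j).ne'
    have hsq : Real.sqrt (a j) * Real.sqrt (a j) = a j := Real.mul_self_sqrt (ha j).le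
    rw [h1g j]
    simp only [hm_def]
    field_simp
    linear_combination (e j + a j * s j ^ 4) * hsa2 j - a j * hde j
  -- main computation : (Ω⁻¹ + diagonal m) * (Dh * (1-E) * Dh) = 1
  have hΩΩ : Ω⁻¹ * Ω = 1 := Matrix.nonsing_inv_mul Ω hΩ.det_pos.ne'.isUnit
  have hX : Dh * (1 - E) * Dh = Dh * ((1 - G) * (C * (Di * Ω))) := by
    rw [hIE]
    have h1 : Dh * ((1 - G) * C * (Di * Ω * Di)) * Dh =
        Dh * ((1 - G) * (C * (Di * (Ω * (Di * Dh))))) := by noncomm_ring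
    rw [h1, hDiDh, mul_one]
  have key : Dh * (1 - G) + Ω * Di = Dh * K := by
    have h2 : Ω * Di = Dh * (Di * Ω * Di) := by
      rw [← mul_assoc, ← mul_assoc, hDhDi, one_mul]
    rw [h2, hK_def]
    noncomm_ring
  have e1 : Matrix.diagonal m * (Dh * ((1 - G) * (C * (Di * Ω)))) = Di * (C * (Di * Ω)) := by
    calc Matrix.diagonal m * (Dh * ((1 - G) * (C * (Di * Ω))))
        = (Matrix.diagonal m * Dh * (1 - G)) * (C * (Di * Ω)) := by noncomm_ring
      _ = Di * (C * (Di * Ω)) := by rw [hmD]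
  have e2 : Di * (C * (Di * Ω)) = Ω⁻¹ * ((Ω * Di) * (C * (Di * Ω))) := by
    calc Di * (C * (Di * Ω)) = 1 * (Di * (C * (Di * Ω))) := (one_mul _).symm
      _ = (Ω⁻¹ * Ω) * (Di * (C * (Di * Ω))) := by rw [hΩΩ]
      _ = Ω⁻¹ * ((Ω * Di) * (C * (Di * Ω))) := by noncomm_ring
  have hfin : (Ω⁻¹ + Matrix.diagonal m) * (Dh * (1 - E) * Dh) = 1 := by
    rw [hX]
    calc (Ω⁻¹ + Matrix.diagonal m) * (Dh * ((1 - G) * (C * (Di * Ω))))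
        = Ω⁻¹ * (Dh * ((1 - G) * (C * (Di * Ω)))) +
            Matrix.diagonal m * (Dh * ((1 - G) * (C * (Di * Ω)))) := by rw [add_mul]
      _ = Ω⁻¹ * (Dh * ((1 - G) * (C * (Di * Ω)))) +
            Ω⁻¹ * ((Ω * Di) * (C * (Di * Ω))) := by rw [e1, e2]
      _ = Ω⁻¹ * ((Dh * (1 - G) + Ω * Di) * (C * (Di * Ω))) := by noncomm_ring
      _ = Ω⁻¹ * (Dh * K * (C * (Di * Ω))) := by rw [key]
      _ = Ω⁻¹ * (Dh * (K * C) * (Di * Ω)) := by noncomm_ring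
      _ = Ω⁻¹ * (Dh * (Di * Ω)) := by rw [hKC, mul_one]
      _ = Ω⁻¹ * Ω := by rw [← mul_assoc Dh Di Ω, hDhDi, one_mul]
      _ = 1 := hΩΩ
  exact (Matrix.inv_eq_right_inv hfin).symm
end
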